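/- arXiv:2209.08086 — 3 statements merged into one kernel-verified Lean document; each statement's English description precedes it below -/
import Mathlib

section
/- Let k0 > 0, f : ℝ³ → ℝ be integrable, and R_s, R_t ∈ SO(3) with R_s·e3 ≠ R_t·e3 and R_s·e3 ≠ −R_t·e3; write ν̃_s = ν_{R_s} ∘ τ^{−1} and ν̃_t = ν_{R_t} ∘ τ^{−1}. Suppose there exist exactly one b ∈ (0,∞) and exactly one pair of positively oriented orthonormal bases (w₁¹, w₁²) and (w₂¹, w₂²) of ℝ² such that, with the straight lines Γ_ℓ(ξ) = −b·w_ℓ¹ + ξ·w_ℓ² and Γ*_ℓ(ξ) = (k0²/b)·w_ℓ¹ − ξ·w_ℓ² for ℓ ∈ {1,2}, one has ν̃_s(Γ₁(ξ)) = ν̃_t(Γ₂(−ξ)) for all ξ ∈ ℝ with ξ² > k0² − b², and ν̃_s(Γ*₁(ξ)) = ν̃_t(Γ*₂(ξ)) for all ξ ∈ ℝ with ξ² > k0² − k0⁴/b². Then, writing w₁¹ = (cos φ₁, sin φ₁) and w₂¹ = (cos φ₂, sin φ₂), one has R_sᵀR_t = Q³(φ₁)·Q²(2·arctan(b/k0))·Q³(π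 − φ₂). -/
noncomputable section
open Real Set MeasureTheory
open scoped RealInnerProductSpace

abbrev R3 : Type := EuclideanSpace ℝ (Fin 3)
abbrev R2 : Type := EuclideanSpace ℝ (Fin 2)
abbrev Mat3 : Type := Matrix (Fin 3) (Fin 3) ℝ

def SO3 (R : Mat3) : Prop := R.transpose * R = 1 ∧ R.det = 1

def e3 : R3 := WithLp.toLp 2 (![0, 0, 1] : Fin 3 → ℝ)

def act3 (R : Mat3) (x : R3) : R3 := WithLp.toLp 2 (R.mulVec x)

def cross3 (x y : R3) : R3 := WithLp.toLp 2 (crossProduct x y)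

def rotE3 (R : Mat3) : R3 := act3 R e3

def v1 (Rs Rt : Mat3) : R3 := ‖rotE3 Rs + rotE3 Rt‖⁻¹ • (rotE3 Rs + rotE3 Rt)

def v2 (Rs Rt : Mat3) : R3 :=
  ‖cross3 (rotE3 Rs) (rotE3 Rt)‖⁻¹ • cross3 (rotE3 Rs) (rotE3 Rt)

def v3 (Rs Rt : Mat3) : R3 := ‖rotE3 Rs - rotE3 Rt‖⁻¹ • (rotE3 Rs - rotE3 Rt)

def aRad (k0 : ℝ) (Rs Rt : Mat3) : ℝ := k0 / 2 * ‖rotE3 Rs + rotE3 Rt‖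

def sigmaArc (k0 : ℝ) (Rs Rt : Mat3) (β : ℝ) : R3 :=
  (aRad k0 Rs Rt * (Real.cos β - 1)) • v1 Rs Rt + (aRad k0 Rs Rt * Real.sin β) • v2 Rs Rt

def cST (Rs Rt : Mat3) : ℝ := ⟪rotE3 Rs, rotE3 Rt⟫

def Jset (Rs Rt : Mat3) : Set ℝ :=
  if cST Rs Rt ≤ 0 then Ioc (-π) π
  else Ioo (-(Real.arccos ((cST Rs Rt - 1) / (cST Rs Rt + 1))))
    (Real.arccos ((cST Rs Rt - 1) / (cST Rs Rt + 1)))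

def kappa (k0 : ℝ) (k : R2) : ℝ := Real.sqrt (k0 ^ 2 - ‖k‖ ^ 2)

def hmap (k0 : ℝ) (k : R2) : R3 := WithLp.toLp 2 (![k 0, k 1, kappa k0 k - k0] : Fin 3 → ℝ)

def ball2 (k0 : ℝ) : Set R2 := {k | ‖k‖ < k0}

def Hemi (k0 : ℝ) (R : Mat3) : Set R3 := (fun k => act3 R (hmap k0 k)) '' ball2 k0

def Q2mat (α : ℝ) : Mat3 :=
  !![Real.cos α, 0, Real.sin α; 0, 1, 0; -Real.sin α, 0, Real.cos α]

def Q3mat (α : ℝ) : Mat3 :=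
  !![Real.cos α, -Real.sin α, 0; Real.sin α, Real.cos α, 0; 0, 0, 1]

/-- The 3D Fourier transform `𝓕f(y) = (2π)^{−3/2} ∫ f(x) e^{−i⟨x,y⟩} dx`. -/
def FT (f : R3 → ℝ) (y : R3) : ℂ :=
  ((2 * π : ℝ) ^ (-(3 : ℝ) / 2) : ℝ) *
    ∫ x : R3, (f x : ℂ) * Complex.exp (-Complex.I * (⟪x, y⟫ : ℝ))

/-- The scaled squared energy `ν_R(k) = |𝓕f(R·h(k))|²`. -/
def nu (k0 : ℝ) (f : R3 → ℝ) (R : Mat3) (k : R2) : ℝ :=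
  ‖FT f (act3 R (hmap k0 k))‖ ^ 2

def rot2 (α : ℝ) : Matrix (Fin 2) (Fin 2) ℝ :=
  !![Real.cos α, -Real.sin α; Real.sin α, Real.cos α]

def act2 (Q : Matrix (Fin 2) (Fin 2) ℝ) (k : R2) : R2 := WithLp.toLp 2 (Q.mulVec k)

/-- Inverse of `τ`: `τ⁻¹(y) = (2k0²/(k0² + ‖y‖²))·y`. -/
def tauInv (k0 : ℝ) (y : R2) : R2 := (2 * k0 ^ 2 / (k0 ^ 2 + ‖y‖ ^ 2)) • y

/-- The transformed scaled squared energy `ν̃_R = ν_R ∘ τ⁻¹`. -/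
def nuT (k0 : ℝ) (f : R3 → ℝ) (R : Mat3) (y : R2) : ℝ := nu k0 f R (tauInv k0 y)

/-- `(w¹, w²)` is a positively oriented orthonormal basis of `ℝ²`. -/
def posONB (w1 w2 : R2) : Prop :=
  ‖w1‖ = 1 ∧ ‖w2‖ = 1 ∧ ⟪w1, w2⟫ = 0 ∧ w1 0 * w2 1 - w1 1 * w2 0 = 1

/-- The common line matching property of Theorem A.3 for the parameter `b` and the pair of
positively oriented orthonormal bases `(w₁¹, w₁²)`, `(w₂¹, w₂²)` of `ℝ²`, along the straight
lines `Γ_ℓ(ξ) = −b·w_ℓ¹ + ξ·w_ℓ²` and `Γ*_ℓ(ξ) = (k0²/b)·w_ℓ¹ − ξ·w_ℓ²`. -/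
def lineMatchProp (k0 : ℝ) (f : R3 → ℝ) (Rs Rt : Mat3)
    (q : ℝ × (R2 × R2) × (R2 × R2)) : Prop :=
  0 < q.1 ∧ posONB q.2.1.1 q.2.1.2 ∧ posONB q.2.2.1 q.2.2.2 ∧
  (∀ ξ : ℝ, ξ ^ 2 > k0 ^ 2 - q.1 ^ 2 →
    nuT k0 f Rs ((-q.1) • q.2.1.1 + ξ • q.2.1.2)
      = nuT k0 f Rt ((-q.1) • q.2.2.1 + (-ξ) • q.2.2.2)) ∧
  (∀ ξ : ℝ, ξ ^ 2 > k0 ^ 2 - k0 ^ 4 / q.1 ^ 2 →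
    nuT k0 f Rs ((k0 ^ 2 / q.1) • q.2.1.1 - ξ • q.2.1.2)
      = nuT k0 f Rt ((k0 ^ 2 / q.1) • q.2.2.1 - ξ • q.2.2.2))




lemma exists_angle (x y r : ℝ) (h : x ^ 2 + y ^ 2 = r ^ 2) (hr : 0 < r) :
    ∃ θ, x = r * Real.cos θ ∧ y = r * Real.sin θ := by
  have hz : (⟨x, y⟩ : ℂ) ≠ 0 := by
    intro h0
    rw [Complex.ext_iff] at h0
    simp at h0
    nlinarith [h0.1, h0.2]
  have habs : ‖(⟨x, y⟩ : ℂ)‖ = r := by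
    rw [Complex.norm_def, Complex.normSq_mk]
    rw [show x * x + y * y = r ^ 2 by nlinarith]
    exact Real.sqrt_sq hr.le
  refine ⟨Complex.arg ⟨x, y⟩, ?_, ?_⟩
  · have := Complex.cos_arg hz
    rw [habs] at this
    field_simp at this ⊢
    linarith [this]
  · have := Complex.sin_arg (⟨x, y⟩ : ℂ)
    rw [habs] at this
    field_simp at this ⊢
    linarith [this]


lemma Q3_mul_Q3 (a b : ℝ) : Q3mat a * Q3mat b = Q3mat (a + b) := by
  ext i j
  fin_cases i <;> fin_cases j <;>
    simp [Q3mat, Matrix.mul_apply, Fin.sum_univ_three, Real.cos_add, Real.sin_add] <;> ring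
lemma Q3_zero : Q3mat 0 = 1 := by
  ext i j; fin_cases i <;> fin_cases j <;> simp [Q3mat] <;> rfl
lemma Q3_transpose (a : ℝ) : (Q3mat a).transpose = Q3mat (-a) := by
  ext i j; fin_cases i <;> fin_cases j <;> simp [Q3mat]
lemma Q3_det (a : ℝ) : (Q3mat a).det = 1 := by
  simp [Q3mat, Matrix.det_fin_three]
  nlinarith [Real.sin_sq_add_cos_sq a]



set_option maxHeartbeats 1000000 in
lemma euler (M : Mat3) (h1 : M.transpose * M = 1) (h2 : M * M.transpose = 1)
    (hdet : M.det = 1) (hm : (M 2 2) ^ 2 < 1) :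
    ∃ α p1 p2, 0 < α ∧ α < π ∧ M = Q3mat p1 * Q2mat α * Q3mat (π - p2) := by
  have hc1 : -1 < M 2 2 := by nlinarith
  have hc2 : M 2 2 < 1 := by nlinarith
  set c := M 2 2 with hc
  set s : ℝ := Real.sqrt (1 - c ^ 2) with hs
  have hs0 : 0 < s := Real.sqrt_pos.mpr (by nlinarith)
  have hssq : s ^ 2 = 1 - c ^ 2 := Real.sq_sqrt (by nlinarith)
  have e1 : ∀ i j, (M 0 i * M 0 j + M 1 i * M 1 j + M 2 i * M 2 j)
      = if i = j then 1 else 0 := by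
    intro i j
    have := congrFun (congrFun h1 i) j
    simpa [Matrix.mul_apply, Fin.sum_univ_three, Matrix.one_apply] using this
  have e2 : ∀ i j, (M i 0 * M j 0 + M i 1 * M j 1 + M i 2 * M j 2)
      = if i = j then 1 else 0 := by
    intro i j
    have := congrFun (congrFun h2 i) j
    simpa [Matrix.mul_apply, Fin.sum_univ_three, Matrix.one_apply] using this
  obtain ⟨p1, hp1c, hp1s⟩ := exists_angle (M 0 2) (M 1 2) s
    (by have := e1 2 2; simp at this; nlinarith) hs0
  obtain ⟨p2, hp2c, hp2s⟩ := exists_angle (M 2 0) (M 2 1) s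
    (by have := e2 2 2; simp at this; nlinarith) hs0
  refine ⟨Real.arccos c, p1, p2, Real.arccos_pos.mpr hc2, lt_of_le_of_ne (Real.arccos_le_pi c) (fun h => absurd (Real.arccos_eq_pi.mp h) (by linarith)), ?_⟩
  have hca : Real.cos (Real.arccos c) = c := Real.cos_arccos hc1.le hc2.le
  have hsa : Real.sin (Real.arccos c) = s := by
    rw [Real.sin_arccos, hs]
  set N : Mat3 := Q3mat (-p1) * M * Q3mat (p2 - π) with hN
  have hp12 : Real.sin p1 ^ 2 + Real.cos p1 ^ 2 = 1 := Real.sin_sq_add_cos_sq p1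
  have hp22 : Real.sin p2 ^ 2 + Real.cos p2 ^ 2 = 1 := Real.sin_sq_add_cos_sq p2
  have hrec : M = Q3mat p1 * N * Q3mat (π - p2) := by
    rw [hN]
    simp only [← Matrix.mul_assoc]
    rw [Q3_mul_Q3, show p1 + -p1 = 0 by ring, Q3_zero, Matrix.one_mul,
      Matrix.mul_assoc, Q3_mul_Q3, show p2 - π + (π - p2) = 0 by ring, Q3_zero,
      Matrix.mul_one]
  have hN02 : N 0 2 = s := by
    rw [hN]
    simp only [Matrix.mul_apply, Fin.sum_univ_three]
    simp [Q3mat, hp1c, hp1s]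
    nlinarith [hp12]
  have hN12 : N 1 2 = 0 := by
    rw [hN]
    simp only [Matrix.mul_apply, Fin.sum_univ_three]
    simp [Q3mat, hp1c, hp1s]
    nlinarith [hp12]
  have hN22 : N 2 2 = c := by
    rw [hN]
    simp only [Matrix.mul_apply, Fin.sum_univ_three]
    simp [Q3mat]
    rw [hc]
  have hN20 : N 2 0 = -s := by
    rw [hN]
    simp only [Matrix.mul_apply, Fin.sum_univ_three]
    simp [Q3mat, hp2c, hp2s, Real.cos_sub, Real.sin_sub]
    nlinarith [hp22]
  have hN21 : N 2 1 = 0 := by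
    rw [hN]
    simp only [Matrix.mul_apply, Fin.sum_univ_three]
    simp [Q3mat, hp2c, hp2s, Real.cos_sub, Real.sin_sub]
    nlinarith [hp22]
  have hN1 : N.transpose * N = 1 := by
    rw [hN]
    simp only [Matrix.transpose_mul, Q3_transpose, Matrix.mul_assoc]
    rw [show (- -p1) = p1 by ring]
    rw [← Matrix.mul_assoc (Q3mat p1) (Q3mat (-p1)), Q3_mul_Q3,
      show p1 + -p1 = 0 by ring, Q3_zero, Matrix.one_mul,
      ← Matrix.mul_assoc M.transpose M, h1, Matrix.one_mul, Q3_mul_Q3,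
      show -(p2 - π) + (p2 - π) = 0 by ring, Q3_zero]
  have hN2 : N * N.transpose = 1 := mul_eq_one_comm.mp hN1
  have hNdet : N.det = 1 := by
    simp [hN, Matrix.det_mul, Q3_det, hdet]
  clear_value N
  clear hN
  have f1 : ∀ i j, (N 0 i * N 0 j + N 1 i * N 1 j + N 2 i * N 2 j)
      = if i = j then 1 else 0 := by
    intro i j
    have := congrFun (congrFun hN1 i) j
    simpa [Matrix.mul_apply, Fin.sum_univ_three, Matrix.one_apply] using this
  have f2 : ∀ i j, (N i 0 * N j 0 + N i 1 * N j 1 + N i 2 * N j 2)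
      = if i = j then 1 else 0 := by
    intro i j
    have := congrFun (congrFun hN2 i) j
    simpa [Matrix.mul_apply, Fin.sum_univ_three, Matrix.one_apply] using this
  have hN10 : N 1 0 = 0 := by
    have h := f2 1 2
    rw [hN12, hN20, hN21, hN22] at h
    simp at h
    rcases h with h | h
    · exact h
    · exact absurd h (ne_of_gt hs0)
  have hN01 : N 0 1 = 0 := by
    have h := f1 1 2
    rw [hN02, hN12, hN21, hN22] at h
    simp at h
    rcases h with h | h
    · exact h
    · exact absurd h (ne_of_gt hs0)
  have hN00 : N 0 0 = c := by
    have h := f1 0 2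
    rw [hN02, hN12, hN20, hN22] at h
    simp at h
    have hfact : s * (N 0 0 - c) = 0 := by nlinarith [h]
    rcases mul_eq_zero.mp hfact with h' | h'
    · exact absurd h' (ne_of_gt hs0)
    · linarith
  have hN11 : N 1 1 = 1 := by
    have hd := hNdet
    rw [Matrix.det_fin_three, hN01, hN10, hN02, hN12, hN20, hN21, hN22, hN00] at hd
    nlinarith [hssq]
  have hNQ : N = Q2mat (Real.arccos c) := by
    ext i j
    fin_cases i <;> fin_cases j <;>
      simp [Q2mat, hca, hsa, hN00, hN01, hN02, hN10, hN11, hN12, hN20, hN21, hN22]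
  rw [hrec, hNQ]

lemma norm_sq_R2 (y : R2) : ‖y‖ ^ 2 = y 0 ^ 2 + y 1 ^ 2 := by
  rw [EuclideanSpace.norm_eq]
  rw [Real.sq_sqrt (by positivity)]
  simp [Fin.sum_univ_two, sq_abs]

lemma tauInv_apply (k0 : ℝ) (y : R2) (i : Fin 2) :
    tauInv k0 y i = (2 * k0 ^ 2 / (k0 ^ 2 + (y 0 ^ 2 + y 1 ^ 2))) * y i := by
  rw [tauInv, ← norm_sq_R2]
  rfl

lemma hmap_tauInv (k0 : ℝ) (hk0 : 0 < k0) (y : R2)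
    (hy : k0 ^ 2 ≤ y 0 ^ 2 + y 1 ^ 2) :
    hmap k0 (tauInv k0 y)
      = (2 * k0 ^ 2 / (k0 ^ 2 + (y 0 ^ 2 + y 1 ^ 2))) • (![y 0, y 1, -k0] : Fin 3 → ℝ) := by
  set t : ℝ := y 0 ^ 2 + y 1 ^ 2 with ht
  have htpos : 0 < k0 ^ 2 + t := by positivity
  have hkap : kappa k0 (tauInv k0 y) = k0 * (t - k0 ^ 2) / (k0 ^ 2 + t) := by
    rw [kappa, norm_sq_R2, tauInv_apply, tauInv_apply, ← ht]
    rw [show k0 ^ 2 - ((2 * k0 ^ 2 / (k0 ^ 2 + t) * y 0) ^ 2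
        + (2 * k0 ^ 2 / (k0 ^ 2 + t) * y 1) ^ 2)
      = (k0 * (t - k0 ^ 2) / (k0 ^ 2 + t)) ^ 2 by
        field_simp
        ring]
    exact Real.sqrt_sq (div_nonneg (by nlinarith) (by positivity))
  funext i
  fin_cases i
  · show hmap k0 (tauInv k0 y) 0 = _
    rw [hmap]
    show tauInv k0 y 0 = _
    rw [tauInv_apply]
    rfl
  · show hmap k0 (tauInv k0 y) 1 = _
    rw [hmap]
    show tauInv k0 y 1 = _
    rw [tauInv_apply]
    rfl
  · show hmap k0 (tauInv k0 y) 2 = _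
    rw [hmap]
    show kappa k0 (tauInv k0 y) - k0 = _
    rw [hkap]
    show _ = 2 * k0 ^ 2 / (k0 ^ 2 + t) * (-k0)
    field_simp
    ring

lemma matchV1 (k0 b ξ p1 p2 α : ℝ)
    (hr1 : k0 * Real.sin α = b + b * Real.cos α)
    (hr2 : b * Real.sin α = k0 - k0 * Real.cos α) :
    (![-b * Real.cos p1 - ξ * Real.sin p1, -b * Real.sin p1 + ξ * Real.cos p1, -k0]
        : Fin 3 → ℝ)
      = (Q3mat p1 * Q2mat α * Q3mat (π - p2)).mulVec
          ![-b * Real.cos p2 + ξ * Real.sin p2, -b * Real.sin p2 - ξ * Real.cos p2, -k0] := by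
  have hg2 : Real.sin p2 ^ 2 = 1 - Real.cos p2 ^ 2 := by
    nlinarith [Real.sin_sq_add_cos_sq p2]
  funext i
  fin_cases i
  · simp [Matrix.mulVec, Matrix.mul_apply, Fin.sum_univ_three, Q3mat, Q2mat, dotProduct, Matrix.vecHead, Matrix.vecTail,
      Real.cos_pi_sub, Real.sin_pi_sub]
    linear_combination (ξ * Real.sin p1 - b * Real.cos p1 * Real.cos α) * hg2
      + Real.cos p1 * hr1
  · simp [Matrix.mulVec, Matrix.mul_apply, Fin.sum_univ_three, Q3mat, Q2mat, dotProduct, Matrix.vecHead, Matrix.vecTail,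
      Real.cos_pi_sub, Real.sin_pi_sub]
    linear_combination (-(b * Real.sin p1 * Real.cos α) - ξ * Real.cos p1) * hg2
      + Real.sin p1 * hr1
  · simp [Matrix.mulVec, Matrix.mul_apply, Fin.sum_univ_three, Q3mat, Q2mat, dotProduct, Matrix.vecHead, Matrix.vecTail,
      Real.cos_pi_sub, Real.sin_pi_sub]
    linear_combination (b * Real.sin α) * hg2 + hr2

lemma matchV2 (k0 b ξ p1 p2 α : ℝ)
    (hr1 : k0 * Real.sin α = b + b * Real.cos α)
    (hr2 : b * Real.sin α = k0 - k0 * Real.cos α) :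
    (![k0 ^ 2 * Real.cos p1 + b * ξ * Real.sin p1, k0 ^ 2 * Real.sin p1 - b * ξ * Real.cos p1,
        -(b * k0)] : Fin 3 → ℝ)
      = -((Q3mat p1 * Q2mat α * Q3mat (π - p2)).mulVec
          ![k0 ^ 2 * Real.cos p2 + b * ξ * Real.sin p2,
            k0 ^ 2 * Real.sin p2 - b * ξ * Real.cos p2, -(b * k0)]) := by
  have hg2 : Real.sin p2 ^ 2 = 1 - Real.cos p2 ^ 2 := by
    nlinarith [Real.sin_sq_add_cos_sq p2]
  have hr3 : b ^ 2 * Real.cos α = k0 ^ 2 - k0 ^ 2 * Real.cos α - b ^ 2 := by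
    linear_combination k0 * hr2 - b * hr1
  funext i
  fin_cases i
  · simp [Matrix.mulVec, Matrix.mul_apply, Fin.sum_univ_three, Q3mat, Q2mat, dotProduct, Matrix.vecHead, Matrix.vecTail,
      Real.cos_pi_sub, Real.sin_pi_sub]
    linear_combination (-(b * ξ * Real.sin p1) - k0 ^ 2 * Real.cos p1 * Real.cos α) * hg2
      + (-(b * Real.cos p1)) * hr1 + (-Real.cos p1) * hr3
  · simp [Matrix.mulVec, Matrix.mul_apply, Fin.sum_univ_three, Q3mat, Q2mat, dotProduct, Matrix.vecHead, Matrix.vecTail,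
      Real.cos_pi_sub, Real.sin_pi_sub]
    linear_combination (b * ξ * Real.cos p1 - k0 ^ 2 * Real.sin p1 * Real.cos α) * hg2
      + (-(b * Real.sin p1)) * hr1 + (-Real.sin p1) * hr3
  · simp [Matrix.mulVec, Matrix.mul_apply, Fin.sum_univ_three, Q3mat, Q2mat, dotProduct, Matrix.vecHead, Matrix.vecTail,
      Real.cos_pi_sub, Real.sin_pi_sub]
    linear_combination (k0 ^ 2 * Real.sin α) * hg2 + k0 * hr1

lemma FT_neg_abs (f : R3 → ℝ) (y : R3) : ‖FT f (-y)‖ = ‖FT f y‖ := by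
  have h : FT f (-y) = (starRingEnd ℂ) (FT f y) := by
    rw [FT, FT, map_mul, ← integral_conj]
    congr 1
    · rw [Complex.conj_ofReal]
    · congr 1
      funext x
      rw [map_mul, Complex.conj_ofReal, ← Complex.exp_conj]
      congr 2
      rw [inner_neg_right]
      push_cast
      simp
  rw [h, Complex.norm_conj]

lemma nuT_eq_of_pt (k0 : ℝ) (f : R3 → ℝ) (Rs Rt : Mat3) (y1 y2 : R2)
    (h : act3 Rs (hmap k0 (tauInv k0 y1)) = act3 Rt (hmap k0 (tauInv k0 y2))) :
    nuT k0 f Rs y1 = nuT k0 f Rt y2 := by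
  rw [nuT, nuT, nu, nu, h]

lemma nuT_eq_of_pt_neg (k0 : ℝ) (f : R3 → ℝ) (Rs Rt : Mat3) (y1 y2 : R2)
    (h : act3 Rs (hmap k0 (tauInv k0 y1)) = -act3 Rt (hmap k0 (tauInv k0 y2))) :
    nuT k0 f Rs y1 = nuT k0 f Rt y2 := by
  rw [nuT, nuT, nu, nu, h, FT_neg_abs]

lemma posONB_angle (θ : ℝ) (w1 w2 : R2)
    (h1 : w1 = (![Real.cos θ, Real.sin θ] : Fin 2 → ℝ))
    (h2 : w2 = (![-Real.sin θ, Real.cos θ] : Fin 2 → ℝ)) : posONB w1 w2 := by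
  have h := Real.sin_sq_add_cos_sq θ
  have e10 : w1 0 = Real.cos θ := by rw [h1]; rfl
  have e11 : w1 1 = Real.sin θ := by rw [h1]; rfl
  have e20 : w2 0 = -Real.sin θ := by rw [h2]; rfl
  have e21 : w2 1 = Real.cos θ := by rw [h2]; rfl
  refine ⟨?_, ?_, ?_, ?_⟩
  · have hn : ‖w1‖ ^ 2 = 1 := by rw [norm_sq_R2, e10, e11]; linarith
    rw [show ‖w1‖ = Real.sqrt (‖w1‖ ^ 2) from (Real.sqrt_sq (norm_nonneg _)).symm, hn,
      Real.sqrt_one]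
  · have hn : ‖w2‖ ^ 2 = 1 := by rw [norm_sq_R2, e20, e21]; nlinarith
    rw [show ‖w2‖ = Real.sqrt (‖w2‖ ^ 2) from (Real.sqrt_sq (norm_nonneg _)).symm, hn,
      Real.sqrt_one]
  · rw [PiLp.inner_apply]
    rw [Fin.sum_univ_two]
    simp [e10, e11, e20, e21]
    ring
  · rw [e10, e11, e20, e21]; nlinarith

lemma lineMatch_geom (k0 : ℝ) (hk0 : 0 < k0) (f : R3 → ℝ) (Rs Rt : Mat3)
    (hRs1 : Rs.transpose * Rs = 1) (α p1 p2 b : ℝ) (hb : 0 < b)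
    (hM : Rs.transpose * Rt = Q3mat p1 * Q2mat α * Q3mat (π - p2))
    (hr1 : k0 * Real.sin α = b + b * Real.cos α)
    (hr2 : b * Real.sin α = k0 - k0 * Real.cos α) :
    lineMatchProp k0 f Rs Rt (b,
      (WithLp.toLp 2 (![Real.cos p1, Real.sin p1] : Fin 2 → ℝ), WithLp.toLp 2 (![-Real.sin p1, Real.cos p1] : Fin 2 → ℝ)),
      (WithLp.toLp 2 (![Real.cos p2, Real.sin p2] : Fin 2 → ℝ), WithLp.toLp 2 (![-Real.sin p2, Real.cos p2] : Fin 2 → ℝ))) := by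
  have hp1 := Real.sin_sq_add_cos_sq p1
  have hp2 := Real.sin_sq_add_cos_sq p2
  have hRsRsT : Rs * Rs.transpose = 1 := mul_eq_one_comm.mp hRs1
  have hMM : ∀ v : Fin 3 → ℝ,
      Rs.mulVec ((Q3mat p1 * Q2mat α * Q3mat (π - p2)).mulVec v) = Rt.mulVec v := by
    intro v
    rw [← hM, Matrix.mulVec_mulVec, ← Matrix.mul_assoc, hRsRsT, Matrix.one_mul]
  refine ⟨hb, posONB_angle p1 _ _ rfl rfl, posONB_angle p2 _ _ rfl rfl, ?_, ?_⟩
  · intro ξ hξ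
    set y1 : R2 := (-b) • (WithLp.toLp 2 (![Real.cos p1, Real.sin p1] : Fin 2 → ℝ))
      + ξ • (WithLp.toLp 2 (![-Real.sin p1, Real.cos p1] : Fin 2 → ℝ)) with hy1
    set y2 : R2 := (-b) • (WithLp.toLp 2 (![Real.cos p2, Real.sin p2] : Fin 2 → ℝ))
      + (-ξ) • (WithLp.toLp 2 (![-Real.sin p2, Real.cos p2] : Fin 2 → ℝ)) with hy2
    have hy10 : y1 0 = -b * Real.cos p1 - ξ * Real.sin p1 := by
      show -b * Real.cos p1 + ξ * -Real.sin p1 = _; ring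
    have hy11 : y1 1 = -b * Real.sin p1 + ξ * Real.cos p1 := by
      show -b * Real.sin p1 + ξ * Real.cos p1 = _; ring
    have hy20 : y2 0 = -b * Real.cos p2 + ξ * Real.sin p2 := by
      show -b * Real.cos p2 + -ξ * -Real.sin p2 = _; ring
    have hy21 : y2 1 = -b * Real.sin p2 - ξ * Real.cos p2 := by
      show -b * Real.sin p2 + -ξ * Real.cos p2 = _; ring
    have hs1 : y1 0 ^ 2 + y1 1 ^ 2 = b ^ 2 + ξ ^ 2 := by
      rw [hy10, hy11]; linear_combination (b ^ 2 + ξ ^ 2) * hp1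
    have hs2 : y2 0 ^ 2 + y2 1 ^ 2 = b ^ 2 + ξ ^ 2 := by
      rw [hy20, hy21]; linear_combination (b ^ 2 + ξ ^ 2) * hp2
    have hdom : k0 ^ 2 ≤ b ^ 2 + ξ ^ 2 := by nlinarith
    apply nuT_eq_of_pt
    rw [act3, act3, hmap_tauInv k0 hk0 y1 (by rw [hs1]; exact hdom),
      hmap_tauInv k0 hk0 y2 (by rw [hs2]; exact hdom), hs1, hs2, hy10, hy11, hy20, hy21]
    rw [Matrix.mulVec_smul, Matrix.mulVec_smul]
    rw [matchV1 k0 b ξ p1 p2 α hr1 hr2, hMM]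
  · intro ξ hξ
    set y1 : R2 := (k0 ^ 2 / b) • (WithLp.toLp 2 (![Real.cos p1, Real.sin p1] : Fin 2 → ℝ))
      - ξ • (WithLp.toLp 2 (![-Real.sin p1, Real.cos p1] : Fin 2 → ℝ)) with hy1
    set y2 : R2 := (k0 ^ 2 / b) • (WithLp.toLp 2 (![Real.cos p2, Real.sin p2] : Fin 2 → ℝ))
      - ξ • (WithLp.toLp 2 (![-Real.sin p2, Real.cos p2] : Fin 2 → ℝ)) with hy2
    have hy10 : y1 0 = k0 ^ 2 / b * Real.cos p1 + ξ * Real.sin p1 := by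
      show k0 ^ 2 / b * Real.cos p1 - ξ * -Real.sin p1 = _; ring
    have hy11 : y1 1 = k0 ^ 2 / b * Real.sin p1 - ξ * Real.cos p1 := by
      show k0 ^ 2 / b * Real.sin p1 - ξ * Real.cos p1 = _; ring
    have hy20 : y2 0 = k0 ^ 2 / b * Real.cos p2 + ξ * Real.sin p2 := by
      show k0 ^ 2 / b * Real.cos p2 - ξ * -Real.sin p2 = _; ring
    have hy21 : y2 1 = k0 ^ 2 / b * Real.sin p2 - ξ * Real.cos p2 := by
      show k0 ^ 2 / b * Real.sin p2 - ξ * Real.cos p2 = _; ring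
    have hs1 : y1 0 ^ 2 + y1 1 ^ 2 = (k0 ^ 2 / b) ^ 2 + ξ ^ 2 := by
      rw [hy10, hy11]; linear_combination ((k0 ^ 2 / b) ^ 2 + ξ ^ 2) * hp1
    have hs2 : y2 0 ^ 2 + y2 1 ^ 2 = (k0 ^ 2 / b) ^ 2 + ξ ^ 2 := by
      rw [hy20, hy21]; linear_combination ((k0 ^ 2 / b) ^ 2 + ξ ^ 2) * hp2
    have hdom : k0 ^ 2 ≤ (k0 ^ 2 / b) ^ 2 + ξ ^ 2 := by
      rw [div_pow]
      have h4 : k0 ^ 4 / b ^ 2 = (k0 ^ 2) ^ 2 / b ^ 2 := by ring_nf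
      nlinarith [hξ, h4]
    apply nuT_eq_of_pt_neg
    rw [act3, act3, hmap_tauInv k0 hk0 y1 (by rw [hs1]; exact hdom),
      hmap_tauInv k0 hk0 y2 (by rw [hs2]; exact hdom), hs1, hs2, hy10, hy11, hy20, hy21]
    have hb' : b ≠ 0 := ne_of_gt hb
    have hv1 : (![k0 ^ 2 / b * Real.cos p1 + ξ * Real.sin p1,
        k0 ^ 2 / b * Real.sin p1 - ξ * Real.cos p1, -k0] : Fin 3 → ℝ)
        = b⁻¹ • (![k0 ^ 2 * Real.cos p1 + b * ξ * Real.sin p1,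
            k0 ^ 2 * Real.sin p1 - b * ξ * Real.cos p1, -(b * k0)] : Fin 3 → ℝ) := by
      funext i; fin_cases i <;> (show _ = b⁻¹ * _; simp [Matrix.cons_val]; field_simp)
    have hv2 : (![k0 ^ 2 / b * Real.cos p2 + ξ * Real.sin p2,
        k0 ^ 2 / b * Real.sin p2 - ξ * Real.cos p2, -k0] : Fin 3 → ℝ)
        = b⁻¹ • (![k0 ^ 2 * Real.cos p2 + b * ξ * Real.sin p2,
            k0 ^ 2 * Real.sin p2 - b * ξ * Real.cos p2, -(b * k0)] : Fin 3 → ℝ) := by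
      funext i; fin_cases i <;> (show _ = b⁻¹ * _; simp [Matrix.cons_val]; field_simp)
    rw [hv1, hv2, smul_smul, smul_smul, Matrix.mulVec_smul, Matrix.mulVec_smul]
    rw [matchV2 k0 b ξ p1 p2 α hr1 hr2, Matrix.mulVec_neg, hMM, smul_neg, WithLp.toLp_neg]


lemma rotE3_apply (R : Mat3) (i : Fin 3) : rotE3 R i = R i 2 := by
  simp [rotE3, act3, e3, Matrix.mulVec, dotProduct, Fin.sum_univ_three]

lemma sq_inner_lt_one (u0 u1 u2 v0 v1 v2 : ℝ)
    (hu : u0 ^ 2 + u1 ^ 2 + u2 ^ 2 = 1) (hv : v0 ^ 2 + v1 ^ 2 + v2 ^ 2 = 1)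
    (hne : ¬(u0 = v0 ∧ u1 = v1 ∧ u2 = v2))
    (hne' : ¬(u0 = -v0 ∧ u1 = -v1 ∧ u2 = -v2)) :
    (u0 * v0 + u1 * v1 + u2 * v2) ^ 2 < 1 := by
  have hd : 0 < (u0 - v0) ^ 2 + (u1 - v1) ^ 2 + (u2 - v2) ^ 2 := by
    by_contra h
    push_neg at h
    exact hne ⟨by nlinarith [sq_nonneg (u0 - v0), sq_nonneg (u1 - v1), sq_nonneg (u2 - v2)],
      by nlinarith [sq_nonneg (u0 - v0), sq_nonneg (u1 - v1), sq_nonneg (u2 - v2)],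
      by nlinarith [sq_nonneg (u0 - v0), sq_nonneg (u1 - v1), sq_nonneg (u2 - v2)]⟩
  have hs : 0 < (u0 + v0) ^ 2 + (u1 + v1) ^ 2 + (u2 + v2) ^ 2 := by
    by_contra h
    push_neg at h
    exact hne' ⟨by nlinarith [sq_nonneg (u0 + v0), sq_nonneg (u1 + v1), sq_nonneg (u2 + v2)],
      by nlinarith [sq_nonneg (u0 + v0), sq_nonneg (u1 + v1), sq_nonneg (u2 + v2)],
      by nlinarith [sq_nonneg (u0 + v0), sq_nonneg (u1 + v1), sq_nonneg (u2 + v2)]⟩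
  nlinarith

/-- Theorem: reconstruction of the rotation via common lines after
stereographic projection.  If there is exactly one parameter `b > 0` together with exactly
one pair of positively oriented orthonormal bases matching the transformed data along the
straight lines `Γ_ℓ` and `Γ*_ℓ`, then, writing `w₁¹ = (cos φ₁, sin φ₁)` and
`w₂¹ = (cos φ₂, sin φ₂)`, one has `Rsᵀ Rt = Q³(φ₁)·Q²(2 arctan(b/k0))·Q³(π − φ₂)`. -/
theorem reconstruction_stereographic (k0 : ℝ) (hk0 : 0 < k0) (f : R3 → ℝ)
    (hf : MeasureTheory.Integrable f) (Rs Rt : Mat3) (hRs : SO3 Rs) (hRt : SO3 Rt)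
    (hne : rotE3 Rs ≠ rotE3 Rt) (hne' : rotE3 Rs ≠ -rotE3 Rt)
    (hexu : ∃! q : ℝ × (R2 × R2) × (R2 × R2), lineMatchProp k0 f Rs Rt q)
    (b : ℝ) (w11 w12 w21 w22 : R2)
    (hq : lineMatchProp k0 f Rs Rt (b, (w11, w12), (w21, w22)))
    (φ₁ φ₂ : ℝ)
    (hw11 : w11 = (![Real.cos φ₁, Real.sin φ₁] : Fin 2 → ℝ))
    (hw21 : w21 = (![Real.cos φ₂, Real.sin φ₂] : Fin 2 → ℝ)) :
    Rs.transpose * Rt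
      = Q3mat φ₁ * Q2mat (2 * Real.arctan (b / k0)) * Q3mat (π - φ₂) := by
  set M : Mat3 := Rs.transpose * Rt with hMdef
  have hRsO : Rs * Rs.transpose = 1 := mul_eq_one_comm.mp hRs.1
  have hM1 : M.transpose * M = 1 := by
    rw [hMdef, Matrix.transpose_mul, Matrix.transpose_transpose, Matrix.mul_assoc,
      ← Matrix.mul_assoc Rs, hRsO, Matrix.one_mul, hRt.1]
  have hM2 : M * M.transpose = 1 := mul_eq_one_comm.mp hM1
  have hMdet : M.det = 1 := by
    rw [hMdef, Matrix.det_mul, Matrix.det_transpose, hRs.2, hRt.2, one_mul]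
  have husq : Rs 0 2 ^ 2 + Rs 1 2 ^ 2 + Rs 2 2 ^ 2 = 1 := by
    have := congrFun (congrFun hRs.1 2) 2
    simp [Matrix.mul_apply, Fin.sum_univ_three, Matrix.one_apply] at this
    nlinarith [this]
  have hvsq : Rt 0 2 ^ 2 + Rt 1 2 ^ 2 + Rt 2 2 ^ 2 = 1 := by
    have := congrFun (congrFun hRt.1 2) 2
    simp [Matrix.mul_apply, Fin.sum_univ_three, Matrix.one_apply] at this
    nlinarith [this]
  have hM22 : M 2 2 = Rs 0 2 * Rt 0 2 + Rs 1 2 * Rt 1 2 + Rs 2 2 * Rt 2 2 := by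
    simp [hMdef, Matrix.mul_apply, Fin.sum_univ_three]
  have hnec : ¬(Rs 0 2 = Rt 0 2 ∧ Rs 1 2 = Rt 1 2 ∧ Rs 2 2 = Rt 2 2) := by
    rintro ⟨h0, h1, h2⟩
    apply hne
    ext i
    rw [rotE3_apply, rotE3_apply]
    fin_cases i <;> assumption
  have hnec' : ¬(Rs 0 2 = -Rt 0 2 ∧ Rs 1 2 = -Rt 1 2 ∧ Rs 2 2 = -Rt 2 2) := by
    rintro ⟨h0, h1, h2⟩
    apply hne'
    ext i
    have : (-rotE3 Rt) i = -(Rt i 2) := by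
      rw [show (-rotE3 Rt) i = -(rotE3 Rt i) from rfl, rotE3_apply]
    rw [rotE3_apply, this]
    fin_cases i <;> assumption
  have hm : (M 2 2) ^ 2 < 1 := by
    rw [hM22]
    exact sq_inner_lt_one _ _ _ _ _ _ husq hvsq hnec hnec'
  obtain ⟨α, p1, p2, hα0, hαπ, hMeq⟩ := euler M hM1 hM2 hMdet hm
  set b' : ℝ := k0 * Real.tan (α / 2) with hb'def
  have hu0 : 0 < α / 2 := by linarith
  have huπ : α / 2 < π / 2 := by linarith
  have hcu : 0 < Real.cos (α / 2) := Real.cos_pos_of_mem_Ioo ⟨by linarith, huπ⟩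
  have hsu : 0 < Real.sin (α / 2) := Real.sin_pos_of_pos_of_lt_pi hu0 (by linarith [Real.pi_pos])
  have htanpos : 0 < Real.tan (α / 2) := by
    rw [Real.tan_eq_sin_div_cos]; positivity
  have hb'pos : 0 < b' := by rw [hb'def]; positivity
  have hsin2 : Real.sin α = 2 * Real.sin (α / 2) * Real.cos (α / 2) := by
    have := Real.sin_two_mul (α / 2)
    rw [show 2 * (α / 2) = α by ring] at this
    linarith
  have hcos2 : Real.cos α = 2 * Real.cos (α / 2) ^ 2 - 1 := by
    have := Real.cos_two_mul (α / 2)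
    rw [show 2 * (α / 2) = α by ring] at this
    linarith
  have hpyth : Real.sin (α / 2) ^ 2 + Real.cos (α / 2) ^ 2 = 1 := Real.sin_sq_add_cos_sq _
  have hr1 : k0 * Real.sin α = b' + b' * Real.cos α := by
    rw [hb'def, hsin2, hcos2, Real.tan_eq_sin_div_cos]
    field_simp
    ring
  have hr2 : b' * Real.sin α = k0 - k0 * Real.cos α := by
    rw [hb'def, hsin2, hcos2, Real.tan_eq_sin_div_cos]
    field_simp
    linear_combination 2 * hpyth
  have hgeom := lineMatch_geom k0 hk0 f Rs Rt hRs.1 α p1 p2 b' hb'pos hMeq hr1 hr2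
  obtain ⟨q0, _, huniq⟩ := hexu
  have heq : (b, (w11, w12), (w21, w22))
      = (b', ((WithLp.toLp 2 (![Real.cos p1, Real.sin p1] : Fin 2 → ℝ)),
          (WithLp.toLp 2 (![-Real.sin p1, Real.cos p1] : Fin 2 → ℝ))),
        ((WithLp.toLp 2 (![Real.cos p2, Real.sin p2] : Fin 2 → ℝ)),
          (WithLp.toLp 2 (![-Real.sin p2, Real.cos p2] : Fin 2 → ℝ)))) :=
    (huniq _ hq).trans (huniq _ hgeom).symm
  have hbeq : b = b' := congrArg Prod.fst heq
  have hw11eq : w11 = (WithLp.toLp 2 (![Real.cos p1, Real.sin p1] : Fin 2 → ℝ)) :=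
    congrArg (fun q : ℝ × (R2 × R2) × (R2 × R2) => q.2.1.1) heq
  have hw21eq : w21 = (WithLp.toLp 2 (![Real.cos p2, Real.sin p2] : Fin 2 → ℝ)) :=
    congrArg (fun q : ℝ × (R2 × R2) × (R2 × R2) => q.2.2.1) heq
  replace hw11eq := hw11.symm.trans (congrArg WithLp.ofLp hw11eq)
  replace hw21eq := hw21.symm.trans (congrArg WithLp.ofLp hw21eq)
  have hc1 : Real.cos φ₁ = Real.cos p1 := by
    have := congrFun hw11eq 0; simpa using this
  have hs1 : Real.sin φ₁ = Real.sin p1 := by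
    have := congrFun hw11eq 1; simpa using this
  have hc2 : Real.cos φ₂ = Real.cos p2 := by
    have := congrFun hw21eq 0; simpa using this
  have hs2 : Real.sin φ₂ = Real.sin p2 := by
    have := congrFun hw21eq 1; simpa using this
  have hαeq : 2 * Real.arctan (b / k0) = α := by
    rw [hbeq, hb'def]
    rw [show k0 * Real.tan (α / 2) / k0 = Real.tan (α / 2) by
      field_simp]
    rw [Real.arctan_tan (by linarith) huπ]
    ring
  have hQ1 : Q3mat φ₁ = Q3mat p1 := by rw [Q3mat, Q3mat, hc1, hs1]
  have hQ2 : Q3mat (π - φ₂) = Q3mat (π - p2) := by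
    rw [Q3mat, Q3mat, Real.cos_pi_sub, Real.sin_pi_sub, Real.cos_pi_sub, Real.sin_pi_sub,
      hc2, hs2]
  rw [hαeq, hQ1, hQ2]
  exact hMeq
end
end

section
/- Let k0 > 0, let f : ℝ³ → ℝ be integrable with compact support, and let R : ℝ → SO(3) be continuously differentiable with angular velocity ω_t = (ρ_t·φ_{t,1}, ρ_t·φ_{t,2}, ζ_t) in cylindrical coordinates. Then for every t ∈ ℝ and every r ∈ ℝ with |r| > k0: ∂_t ν̃_t(r·φ_t) = (k0·ρ_t + r·ζ_t) · ⟨∇ν̃_t(r·φ_t), (−φ_{t,2}, φ_{t,1})⟩, where ∂_t ν̃_t(y) denotes the derivative of s ↦ ν̃_s(y) at s = t (with y fixed) and ∇ν̃_t(y) the gradient of ν̃_t with respect to y. -/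
noncomputable section
open Real Set MeasureTheory
open scoped RealInnerProductSpace

/-- The half unit circle `S¹₊ = {(cos α, sin α) : α ∈ [0, π)}`. -/
def S1plus : Set R2 :=
  {v | ∃ α : ℝ, 0 ≤ α ∧ α < π ∧ v = (![Real.cos α, Real.sin α] : Fin 2 → ℝ)}

/-- Rotation of a planar vector by 90 degrees: `(φ₁, φ₂) ↦ (−φ₂, φ₁)`. -/
def rot90 (v : R2) : R2 := WithLp.toLp 2 (![-(v 1), v 0] : Fin 2 → ℝ)

open scoped FourierTransform

namespace ICCAux

lemma norm_sq_R2 (x : R2) : ‖x‖^2 = x 0^2 + x 1^2 := by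
  rw [EuclideanSpace.norm_eq, Real.sq_sqrt (by positivity)]
  simp [Fin.sum_univ_two, Real.norm_eq_abs, sq_abs]

lemma inner_R2 (x y : R2) : ⟪x, y⟫ = x 0 * y 0 + x 1 * y 1 := by
  simp [PiLp.inner_apply, Fin.sum_univ_two, RCLike.inner_apply, conj_trivial]; ring

lemma FT_diff (f : R3 → ℝ) (hf : MeasureTheory.Integrable f) (hsupp : HasCompactSupport f) :
    Differentiable ℝ (FT f) := by
  have h1 : Integrable (fun x : R3 => (f x : ℂ)) := hf.ofReal
  have h2 : Integrable (fun v : R3 => ‖v‖ * ‖(f v : ℂ)‖) := by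
    obtain ⟨C, hC⟩ := hsupp.isCompact.isBounded.subset_closedBall 0
    apply (hf.norm.const_mul (max C 0)).mono'
    · exact continuous_norm.aestronglyMeasurable.mul h1.1.norm
    · filter_upwards with v
      by_cases hv : v ∈ tsupport f
      · have hb := hC hv
        rw [Metric.mem_closedBall, dist_zero_right] at hb
        have h0 : ‖(f v : ℂ)‖ = ‖f v‖ := Complex.norm_real _
        rw [Real.norm_eq_abs, abs_of_nonneg (by positivity), h0]
        exact mul_le_mul_of_nonneg_right (le_max_of_le_left hb) (norm_nonneg _)
      · simp [image_eq_zero_of_notMem_tsupport hv]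
  have hd : Differentiable ℝ (𝓕 (fun x : R3 => (f x : ℂ))) :=
    Real.differentiable_fourier h1 (by simpa using h2)
  have hFTeq : FT f = fun y =>
      ((2 * π : ℝ) ^ (-(3:ℝ)/2) : ℝ) • 𝓕 (fun x => (f x : ℂ)) ((2 * π)⁻¹ • y) := by
    funext y
    rw [FT, Real.fourier_eq', Complex.real_smul]
    congr 1
    apply MeasureTheory.integral_congr_ae
    filter_upwards with v
    rw [real_inner_smul_right, smul_eq_mul]
    have h2π : (2 * π) ≠ 0 := by positivity
    rw [show (-2 * π * ((2*π)⁻¹ * ⟪v, y⟫)) = -⟪v, y⟫ by field_simp]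
    rw [mul_comm]
    congr 1
    push_cast
    ring
  rw [hFTeq]
  exact (hd.comp (differentiable_id.fun_const_smul _)).fun_const_smul _

lemma Fsq_diff (f : R3 → ℝ) (hf : MeasureTheory.Integrable f) (hsupp : HasCompactSupport f) :
    Differentiable ℝ (fun x => ‖FT f x‖ ^ 2) := by
  have hFT := FT_diff f hf hsupp
  have heq : (fun x => ‖FT f x‖ ^ 2)
      = fun x => (FT f x).re ^ 2 + (FT f x).im ^ 2 := by
    funext x
    rw [Complex.sq_norm, Complex.normSq_apply]
    ring
  rw [heq]
  exact (((Complex.reCLM.differentiable.comp hFT).pow 2)).add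
    ((Complex.imCLM.differentiable.comp hFT).pow 2)

def mulVecCLM (M : Mat3) : R3 →L[ℝ] R3 :=
  LinearMap.toContinuousLinearMap
    { toFun := fun x => act3 M x
      map_add' := fun x y => by simp [act3, Matrix.mulVec_add]
      map_smul' := fun c x => by simp [act3, Matrix.mulVec_smul] }

lemma mulVecCLM_apply (M : Mat3) (x : R3) : mulVecCLM M x = act3 M x := rfl

lemma curve_hasDerivAt (R R' : ℝ → Mat3)
    (hderiv : ∀ t i j, HasDerivAt (fun s => R s i j) (R' t i j) t)
    (hk : R3) (t : ℝ) :
    HasDerivAt (fun s => act3 (R s) hk) (act3 (R' t) hk) t := by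
  have h : HasDerivAt (fun s => (fun i => (R s).mulVec hk i : Fin 3 → ℝ))
      (fun i => (R' t).mulVec hk i) t := by
    rw [hasDerivAt_pi]
    intro i
    simp only [Matrix.mulVec, dotProduct]
    exact HasDerivAt.fun_sum fun j _ => (hderiv t i j).mul_const (hk j)
  exact ((EuclideanSpace.equiv (Fin 3) ℝ).symm.toContinuousLinearMap.hasFDerivAt.comp_hasDerivAt
    t h :)

end ICCAux

open ICCAux in
set_option maxHeartbeats 1600000

/-- Lemma: infinitesimal common circle relation after stereographic
projection.  With the transformed scaled squared energy `ν̃_t = ν_t ∘ τ⁻¹` and the angular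
velocity `ω_t = (ρ_t φ_{t,1}, ρ_t φ_{t,2}, ζ_t)` in cylindrical coordinates, for every `t`
and every `r` with `|r| > k0`,
`∂_t ν̃_t(r φ_t) = (k0 ρ_t + r ζ_t) ⟨∇ν̃_t(r φ_t), (−φ_{t,2}, φ_{t,1})⟩`. -/
theorem infinitesimal_common_circle_stereo (k0 : ℝ) (hk0 : 0 < k0) (f : R3 → ℝ)
    (hf : MeasureTheory.Integrable f) (hsupp : HasCompactSupport f)
    (R R' : ℝ → Mat3) (hSO : ∀ t, SO3 (R t))
    (hderiv : ∀ t i j, HasDerivAt (fun s => R s i j) (R' t i j) t)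
    (hcont : ∀ i j, Continuous fun t => R' t i j)
    (ω : ℝ → R3)
    (hω : ∀ t (y : R3), act3 ((R t).transpose * R' t) y = cross3 (ω t) y)
    (ρ ζ : ℝ → ℝ) (φ : ℝ → R2) (hφ : ∀ t, φ t ∈ S1plus)
    (hcyl : ∀ t, ω t = (![ρ t * φ t 0, ρ t * φ t 1, ζ t] : Fin 3 → ℝ)) :
    ∀ (t r : ℝ), k0 < |r| →
      deriv (fun s => nuT k0 f (R s) (r • φ t)) t
        = (k0 * ρ t + r * ζ t)
            * ⟪gradient (nuT k0 f (R t)) (r • φ t), rot90 (φ t)⟫ := by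
  intro t r hr
  obtain ⟨α, hα0, hαπ, hφα⟩ := hφ t
  have hφ0 : φ t 0 = Real.cos α := by rw [hφα]; simp
  have hφ1 : φ t 1 = Real.sin α := by rw [hφα]; simp
  have hφsq : φ t 0 ^ 2 + φ t 1 ^ 2 = 1 := by
    rw [hφ0, hφ1]; exact Real.cos_sq_add_sin_sq α
  have hr2 : k0 ^ 2 < r ^ 2 := by
    have h := pow_lt_pow_left₀ hr hk0.le (two_ne_zero)
    simpa [sq_abs] using h
  have hq : (0:ℝ) < k0 ^ 2 + r ^ 2 := by positivity
  set y0 : R2 := r • φ t with hy0def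
  have hy00 : y0 0 = r * φ t 0 := rfl
  have hy01 : y0 1 = r * φ t 1 := rfl
  have hyn : ‖y0‖ ^ 2 = r ^ 2 := by
    rw [ICCAux.norm_sq_R2, hy00, hy01]; linear_combination r ^ 2 * hφsq
  set c : ℝ := 2 * k0 ^ 2 / (k0 ^ 2 + r ^ 2) with hcdef
  set k1 : R2 := tauInv k0 y0 with hk1def
  have hk10 : k1 0 = c * (r * φ t 0) := by
    have h1 : k1 0 = (2 * k0 ^ 2 / (k0 ^ 2 + ‖y0‖ ^ 2)) * y0 0 := rfl
    rw [h1, hyn, hcdef, hy00]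
  have hk11 : k1 1 = c * (r * φ t 1) := by
    have h1 : k1 1 = (2 * k0 ^ 2 / (k0 ^ 2 + ‖y0‖ ^ 2)) * y0 1 := rfl
    rw [h1, hyn, hcdef, hy01]
  have hk1n : ‖k1‖ ^ 2 = c ^ 2 * r ^ 2 := by
    rw [ICCAux.norm_sq_R2, hk10, hk11]; linear_combination (c ^ 2 * r ^ 2) * hφsq
  have hκarg : k0 ^ 2 - ‖k1‖ ^ 2 = (k0 * (r ^ 2 - k0 ^ 2) / (k0 ^ 2 + r ^ 2)) ^ 2 := by
    rw [hk1n, hcdef]; field_simp; ring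
  have hκpos : 0 < k0 * (r ^ 2 - k0 ^ 2) / (k0 ^ 2 + r ^ 2) :=
    div_pos (mul_pos hk0 (by linarith)) hq
  have hκeq : kappa k0 k1 = k0 * (r ^ 2 - k0 ^ 2) / (k0 ^ 2 + r ^ 2) := by
    unfold kappa
    rw [hκarg, Real.sqrt_sq hκpos.le]
  have hargne : k0 ^ 2 - ‖k1‖ ^ 2 ≠ 0 := by rw [hκarg]; positivity
  have hκk0 : kappa k0 k1 - k0 = -(k0 * c) := by
    rw [hκeq, hcdef]; field_simp; ring
  -- components of hmap k0 k1
  have hh0 : hmap k0 k1 0 = c * (r * φ t 0) := by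
    show (![k1 0, k1 1, kappa k0 k1 - k0] : Fin 3 → ℝ) 0 = _
    rw [Matrix.cons_val_zero, hk10]
  have hh1 : hmap k0 k1 1 = c * (r * φ t 1) := by
    show (![k1 0, k1 1, kappa k0 k1 - k0] : Fin 3 → ℝ) 1 = _
    rw [Matrix.cons_val_one, Matrix.cons_val_zero, hk11]
  have hh2 : hmap k0 k1 2 = -(k0 * c) := by
    show (![k1 0, k1 1, kappa k0 k1 - k0] : Fin 3 → ℝ) 2 = _
    rw [Matrix.cons_val_two]
    show kappa k0 k1 - k0 = _
    exact hκk0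
  set K : ℝ := k0 * ρ t + r * ζ t with hKdef
  set w3 : R3 := WithLp.toLp 2 (![-(φ t 1), φ t 0, 0] : Fin 3 → ℝ) with hw3def
  have hw30 : w3 0 = -(φ t 1) := by rw [hw3def]; simp
  have hw31 : w3 1 = φ t 0 := by rw [hw3def]; simp
  have hw32 : w3 2 = 0 := by
    rw [hw3def]
    show (![-(φ t 1), φ t 0, 0] : Fin 3 → ℝ) 2 = _
    rw [Matrix.cons_val_two]
    rfl
  have hω0 : ω t 0 = ρ t * φ t 0 := by rw [hcyl t]; simp
  have hω1 : ω t 1 = ρ t * φ t 1 := by rw [hcyl t]; simp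
  have hω2 : ω t 2 = ζ t := by
    rw [hcyl t]
    show (![ρ t * φ t 0, ρ t * φ t 1, ζ t] : Fin 3 → ℝ) 2 = _
    rw [Matrix.cons_val_two]
    rfl
  have hcross : cross3 (ω t) (hmap k0 k1) = (c * K) • w3 := by
    ext i
    have hsm : ∀ j : Fin 3, ((c * K) • w3) j = (c * K) * w3 j := fun j => rfl
    have hc0 : cross3 (ω t) (hmap k0 k1) 0
        = ω t 1 * hmap k0 k1 2 - ω t 2 * hmap k0 k1 1 := rfl
    have hc1 : cross3 (ω t) (hmap k0 k1) 1
        = ω t 2 * hmap k0 k1 0 - ω t 0 * hmap k0 k1 2 := rfl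
    have hc2 : cross3 (ω t) (hmap k0 k1) 2
        = ω t 0 * hmap k0 k1 1 - ω t 1 * hmap k0 k1 0 := rfl
    fin_cases i
    · rw [show (⟨0, by norm_num⟩ : Fin 3) = (0 : Fin 3) from rfl, hc0, hsm 0, hw30,
        hω1, hω2, hh1, hh2, hKdef]
      ring
    · rw [show (⟨1, by norm_num⟩ : Fin 3) = (1 : Fin 3) from rfl, hc1, hsm 1, hw31,
        hω0, hω2, hh0, hh2, hKdef]
      ring
    · rw [show (⟨2, by norm_num⟩ : Fin 3) = (2 : Fin 3) from rfl, hc2, hsm 2, hw32,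
        hω0, hω1, hh0, hh1]
      ring
  have hu : act3 (R' t) (hmap k0 k1) = act3 (R t) (cross3 (ω t) (hmap k0 k1)) := by
    rw [← hω t (hmap k0 k1)]
    show WithLp.toLp 2 ((R' t).mulVec (hmap k0 k1))
      = WithLp.toLp 2 ((R t).mulVec (((R t).transpose * R' t).mulVec (hmap k0 k1)))
    rw [Matrix.mulVec_mulVec, ← Matrix.mul_assoc,
      mul_eq_one_comm.mp (hSO t).1, Matrix.one_mul]
  -- analytic part
  have hF : Differentiable ℝ (fun x => ‖FT f x‖ ^ 2) := ICCAux.Fsq_diff f hf hsupp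
  set p : R3 := act3 (R t) (hmap k0 k1) with hpdef
  set L := fderiv ℝ (fun x => ‖FT f x‖ ^ 2) p with hLdef
  have hcurve := ICCAux.curve_hasDerivAt R R' hderiv (hmap k0 k1) t
  have hLHS : deriv (fun s => nuT k0 f (R s) y0) t = L (act3 (R' t) (hmap k0 k1)) := by
    have hcomp := (hF p).hasFDerivAt.comp_hasDerivAt t hcurve
    have heq : (fun s => nuT k0 f (R s) y0)
        = (fun x => ‖FT f x‖ ^ 2) ∘ (fun s => act3 (R s) (hmap k0 k1)) := by
      funext s
      rw [hk1def, hy0def]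
      rfl
    rw [heq]
    exact hcomp.deriv
  -- derivative of tauInv at y0
  have hne : k0 ^ 2 + ‖y0‖ ^ 2 ≠ 0 := by rw [hyn]; positivity
  have hnormy : HasFDerivAt (fun y : R2 => ‖y‖ ^ 2)
      (2 • ((innerSL ℝ y0).comp (ContinuousLinearMap.id ℝ R2))) y0 :=
    (hasFDerivAt_id y0).norm_sq
  have hden : HasFDerivAt (fun y : R2 => k0 ^ 2 + ‖y‖ ^ 2)
      ((0 : R2 →L[ℝ] ℝ) + 2 • ((innerSL ℝ y0).comp (ContinuousLinearMap.id ℝ R2))) y0 :=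
    (hasFDerivAt_const _ _).add hnormy
  have hinv : HasDerivAt (fun u : ℝ => 2 * k0 ^ 2 / u)
      (2 * k0 ^ 2 * -(((k0 ^ 2 + ‖y0‖ ^ 2)) ^ 2)⁻¹) (k0 ^ 2 + ‖y0‖ ^ 2) := by
    simpa [div_eq_mul_inv] using (hasDerivAt_inv hne).const_mul (2 * k0 ^ 2)
  have hgfun : HasFDerivAt (fun y : R2 => 2 * k0 ^ 2 / (k0 ^ 2 + ‖y‖ ^ 2))
      ((2 * k0 ^ 2 * -(((k0 ^ 2 + ‖y0‖ ^ 2)) ^ 2)⁻¹) •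
        ((0 : R2 →L[ℝ] ℝ) + 2 • ((innerSL ℝ y0).comp (ContinuousLinearMap.id ℝ R2)))) y0 := by
    have h := hinv.comp_hasFDerivAt y0 hden
    exact h
  set T : R2 →L[ℝ] R2 :=
    (2 * k0 ^ 2 / (k0 ^ 2 + ‖y0‖ ^ 2)) • ContinuousLinearMap.id ℝ R2 +
      ((2 * k0 ^ 2 * -(((k0 ^ 2 + ‖y0‖ ^ 2)) ^ 2)⁻¹) •
        ((0 : R2 →L[ℝ] ℝ) + 2 • ((innerSL ℝ y0).comp (ContinuousLinearMap.id ℝ R2)))).smulRight y0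
    with hTdef
  have hT : HasFDerivAt (tauInv k0) T y0 := by
    rw [hTdef]
    exact (hgfun.smul (hasFDerivAt_id y0) :)
  have hrot0 : rot90 (φ t) 0 = -(φ t 1) := rfl
  have hrot1 : rot90 (φ t) 1 = φ t 0 := rfl
  have hinner0 : ⟪y0, rot90 (φ t)⟫ = 0 := by
    rw [ICCAux.inner_R2, hy00, hy01, hrot0, hrot1]; ring
  have hTval : T (rot90 (φ t)) = c • rot90 (φ t) := by
    have h1 : T (rot90 (φ t)) = (2 * k0 ^ 2 / (k0 ^ 2 + ‖y0‖ ^ 2)) • rot90 (φ t)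
        + ((2 * k0 ^ 2 * -(((k0 ^ 2 + ‖y0‖ ^ 2)) ^ 2)⁻¹) *
            ((0:ℝ) + 2 * ⟪y0, rot90 (φ t)⟫)) • y0 := by
      rw [hTdef]
      simp only [ContinuousLinearMap.add_apply, ContinuousLinearMap.smul_apply,
        ContinuousLinearMap.smulRight_apply, ContinuousLinearMap.comp_apply,
        ContinuousLinearMap.id_apply, ContinuousLinearMap.zero_apply, innerSL_apply_apply,
        smul_eq_mul, nsmul_eq_mul]
      norm_num
    rw [h1, hinner0, hyn, ← hcdef]
    norm_num
  -- derivative of hmap at k1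
  set N : R2 →L[ℝ] ℝ :=
    (0 : R2 →L[ℝ] ℝ) - 2 • ((innerSL ℝ k1).comp (ContinuousLinearMap.id ℝ R2)) with hNdef
  set P2 : R2 →L[ℝ] ℝ := (1 / (2 * Real.sqrt (k0 ^ 2 - ‖k1‖ ^ 2))) • N with hP2def
  set Pv : Fin 3 → (R2 →L[ℝ] ℝ) :=
    ![EuclideanSpace.proj 0, EuclideanSpace.proj 1, P2] with hPvdef
  have hPv0 : Pv 0 = EuclideanSpace.proj (0 : Fin 2) := by rw [hPvdef, Matrix.cons_val_zero]
  have hPv1 : Pv 1 = EuclideanSpace.proj (1 : Fin 2) := by rw [hPvdef, Matrix.cons_val_one, Matrix.cons_val_zero]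
  have hPv2 : Pv 2 = P2 := by rw [hPvdef]; rw [Matrix.cons_val_two]; rfl
  have hΦ : HasFDerivAt (fun k : R2 => (![k 0, k 1, kappa k0 k - k0] : Fin 3 → ℝ))
      (ContinuousLinearMap.pi Pv) k1 := by
    apply hasFDerivAt_pi''
    intro i
    rw [ContinuousLinearMap.proj_pi]
    fin_cases i
    · rw [show (⟨0, by norm_num⟩ : Fin 3) = (0 : Fin 3) from rfl, hPv0]
      exact ((EuclideanSpace.proj (0 : Fin 2) : R2 →L[ℝ] ℝ).hasFDerivAt :)
    · rw [show (⟨1, by norm_num⟩ : Fin 3) = (1 : Fin 3) from rfl, hPv1]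
      exact ((EuclideanSpace.proj (1 : Fin 2) : R2 →L[ℝ] ℝ).hasFDerivAt :)
    · rw [show (⟨2, by norm_num⟩ : Fin 3) = (2 : Fin 3) from rfl, hPv2, hP2def, hNdef]
      have hns : HasFDerivAt (fun kk : R2 => ‖kk‖ ^ 2)
          (2 • ((innerSL ℝ k1).comp (ContinuousLinearMap.id ℝ R2))) k1 :=
        (hasFDerivAt_id k1).norm_sq
      have harg : HasFDerivAt (fun kk : R2 => k0 ^ 2 - ‖kk‖ ^ 2)
          ((0 : R2 →L[ℝ] ℝ) - 2 • ((innerSL ℝ k1).comp (ContinuousLinearMap.id ℝ R2))) k1 :=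
        (hasFDerivAt_const _ _).sub hns
      have h3 := (harg.sqrt hargne).sub_const k0
      exact (h3 :)
  set Hd : R2 →L[ℝ] R3 :=
    ((EuclideanSpace.equiv (Fin 3) ℝ).symm.toContinuousLinearMap).comp
      (ContinuousLinearMap.pi Pv) with hHddef
  have hHd : HasFDerivAt (fun k : R2 => hmap k0 k) Hd k1 := by
    rw [hHddef]
    have h := (EuclideanSpace.equiv (Fin 3) ℝ).symm.toContinuousLinearMap.hasFDerivAt.comp k1 hΦ
    have hfun : (⇑(EuclideanSpace.equiv (Fin 3) ℝ).symm.toContinuousLinearMap ∘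
        fun k : R2 => (![k 0, k 1, kappa k0 k - k0] : Fin 3 → ℝ))
        = fun k : R2 => hmap k0 k := rfl
    rwa [hfun] at h
  have hHd2 : HasFDerivAt (fun k : R2 => hmap k0 k) Hd (tauInv k0 y0) := by
    rw [← hk1def]; exact hHd
  have hG : HasFDerivAt (fun y : R2 => act3 (R t) (hmap k0 (tauInv k0 y)))
      ((ICCAux.mulVecCLM (R t)).comp (Hd.comp T)) y0 := by
    have h1 : HasFDerivAt (fun y : R2 => hmap k0 (tauInv k0 y)) (Hd.comp T) y0 :=
      (hHd2.comp y0 hT :)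
    exact ((ICCAux.mulVecCLM (R t)).hasFDerivAt.comp y0 h1 :)
  have hνt : HasFDerivAt (nuT k0 f (R t))
      (L.comp ((ICCAux.mulVecCLM (R t)).comp (Hd.comp T))) y0 := by
    exact (((hF (act3 (R t) (hmap k0 (tauInv k0 y0)))).hasFDerivAt.comp y0 hG) :)
  have hgrad : ⟪gradient (nuT k0 f (R t)) y0, rot90 (φ t)⟫
      = (L.comp ((ICCAux.mulVecCLM (R t)).comp (Hd.comp T))) (rot90 (φ t)) := by
    rw [← hνt.fderiv]
    exact InnerProductSpace.toDual_symm_apply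
  have hinner1 : ⟪k1, rot90 (φ t)⟫ = 0 := by
    rw [ICCAux.inner_R2, hk10, hk11, hrot0, hrot1]; ring
  have hHdval : Hd (rot90 (φ t)) = w3 := by
    rw [hHddef, hw3def]
    ext i
    have happ : ∀ j : Fin 3,
        (((EuclideanSpace.equiv (Fin 3) ℝ).symm.toContinuousLinearMap).comp
          (ContinuousLinearMap.pi Pv)) (rot90 (φ t)) j = Pv j (rot90 (φ t)) := fun j => rfl
    fin_cases i
    · rw [show (⟨0, by norm_num⟩ : Fin 3) = (0 : Fin 3) from rfl, happ 0, hPv0]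
      simp [hrot0]
    · rw [show (⟨1, by norm_num⟩ : Fin 3) = (1 : Fin 3) from rfl, happ 1, hPv1]
      simp [hrot1]
    · rw [show (⟨2, by norm_num⟩ : Fin 3) = (2 : Fin 3) from rfl, happ 2, hPv2, hP2def, hNdef]
      have : (![-(φ t 1), φ t 0, 0] : Fin 3 → ℝ) 2 = 0 := by
        rw [Matrix.cons_val_two]; rfl
      rw [WithLp.ofLp_toLp, this]
      simp only [ContinuousLinearMap.smul_apply, ContinuousLinearMap.sub_apply,
        ContinuousLinearMap.zero_apply, ContinuousLinearMap.comp_apply,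
        ContinuousLinearMap.id_apply, innerSL_apply_apply, smul_eq_mul, nsmul_eq_mul]
      rw [hinner1]
      ring
  have hRHSval : (L.comp ((ICCAux.mulVecCLM (R t)).comp (Hd.comp T))) (rot90 (φ t))
      = c * L (act3 (R t) w3) := by
    rw [ContinuousLinearMap.comp_apply, ContinuousLinearMap.comp_apply,
      ContinuousLinearMap.comp_apply, hTval, ContinuousLinearMap.map_smul, hHdval, ContinuousLinearMap.map_smul, ContinuousLinearMap.map_smul,
      smul_eq_mul, ICCAux.mulVecCLM_apply]
  rw [hLHS, hu, hcross, hgrad, hRHSval]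
  have hsm : act3 (R t) ((c * K) • w3) = (c * K) • act3 (R t) w3 :=
    by simp [act3, Matrix.mulVec_smul]
  rw [hsm, ContinuousLinearMap.map_smul, smul_eq_mul]
  ring
end
end

section
/- Let k0 > 0, f : ℝ³ → ℝ be integrable with compact support, R : ℝ → SO(3) be continuously differentiable with angular velocity ω_t, and fix t ∈ ℝ. Suppose φ = (φ₁, φ₂) ∈ S¹₊ and ρ, ζ ∈ ℝ satisfy ∂_t ν̃_t(r·φ) = (k0·ρ + r·ζ) · ⟨∇ν̃_t(r·φ), (−φ₂, φ₁)⟩ for all r ∈ ℝ with |r| > k0; suppose φ is the unique element of S¹₊ for which real numbers with this property exist; and suppose the set { r ∈ ℝ : |r| > k0 and ⟨∇ν̃_t(r·φ), (−φ₂, φ₁)⟩ ≠ 0 } has at least two elements. Then ω_t = (ρ·φ₁, ρ·φ₂, ζ). -/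
noncomputable section
open Real Set MeasureTheory
open scoped RealInnerProductSpace

namespace ReconAux

open FourierTransform

/-- the composite map `h ∘ τ⁻¹`. -/
def mmap (k0 : ℝ) (y : R2) : R3 := hmap k0 (tauInv k0 y)

lemma normsq_R2 (y : R2) : ‖y‖ ^ 2 = y 0 ^ 2 + y 1 ^ 2 := by
  rw [EuclideanSpace.norm_eq, Real.sq_sqrt (by positivity)]
  simp [Fin.sum_univ_two, sq_abs]

lemma mmap_apply0 (k0 : ℝ) (y : R2) :
    mmap k0 y 0 = 2 * k0 ^ 2 / (k0 ^ 2 + (y 0 ^ 2 + y 1 ^ 2)) * y 0 := by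
  simp [mmap, hmap, tauInv, normsq_R2]

lemma mmap_apply1 (k0 : ℝ) (y : R2) :
    mmap k0 y 1 = 2 * k0 ^ 2 / (k0 ^ 2 + (y 0 ^ 2 + y 1 ^ 2)) * y 1 := by
  simp [mmap, hmap, tauInv, normsq_R2]

lemma mmap_apply2 (k0 : ℝ) (y : R2) :
    mmap k0 y 2 = Real.sqrt (k0 ^ 2 -
      (2 * k0 ^ 2 / (k0 ^ 2 + (y 0 ^ 2 + y 1 ^ 2))) ^ 2 * (y 0 ^ 2 + y 1 ^ 2)) - k0 := by
  have h : ‖tauInv k0 y‖ ^ 2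
      = (2 * k0 ^ 2 / (k0 ^ 2 + (y 0 ^ 2 + y 1 ^ 2))) ^ 2 * (y 0 ^ 2 + y 1 ^ 2) := by
    rw [tauInv, norm_smul, mul_pow, ← normsq_R2, normsq_R2 y]
    have hnn : (0:ℝ) ≤ k0 ^ 2 + (y 0 ^ 2 + y 1 ^ 2) := by positivity
    simp [Real.norm_eq_abs, sq_abs, abs_of_nonneg hnn]
  simp only [mmap, hmap, kappa]
  rw [← h]
  simp

end ReconAux

namespace ReconAux

lemma key_pos {k0 n : ℝ} (hk0 : 0 < k0) (hn : k0 ^ 2 < n) :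
    0 < k0 ^ 2 - (2 * k0 ^ 2 / (k0 ^ 2 + n)) ^ 2 * n := by
  have h1 : 0 < k0 ^ 2 + n := by nlinarith
  have h2 : k0 ^ 2 - (2 * k0 ^ 2 / (k0 ^ 2 + n)) ^ 2 * n
      = k0 ^ 2 * (n - k0 ^ 2) ^ 2 / (k0 ^ 2 + n) ^ 2 := by
    field_simp
    ring
  rw [h2]
  exact div_pos (mul_pos (pow_pos hk0 2) (pow_pos (by linarith) 2)) (pow_pos h1 2)

lemma diffAt_proj {i : Fin 2} {y : R2} : DifferentiableAt ℝ (fun z : R2 => z i) y := by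
  have := (EuclideanSpace.proj (𝕜 := ℝ) i).differentiableAt (x := y)
  exact this

lemma diff_mmap {k0 : ℝ} (hk0 : 0 < k0) {y : R2} (hy : k0 < ‖y‖) :
    DifferentiableAt ℝ (mmap k0) y := by
  have hn : k0 ^ 2 < y 0 ^ 2 + y 1 ^ 2 := by
    rw [← normsq_R2]; nlinarith [norm_nonneg y]
  have h0 : DifferentiableAt ℝ (fun z : R2 => z 0) y := diffAt_proj
  have h1 : DifferentiableAt ℝ (fun z : R2 => z 1) y := diffAt_proj
  have hq : DifferentiableAt ℝ (fun z : R2 => z 0 ^ 2 + z 1 ^ 2) y :=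
    (h0.pow 2).add (h1.pow 2)
  have hdenne : k0 ^ 2 + (y 0 ^ 2 + y 1 ^ 2) ≠ 0 := by nlinarith
  have hsum : DifferentiableAt ℝ (fun z : R2 => k0 ^ 2 + (z 0 ^ 2 + z 1 ^ 2)) y :=
    hq.const_add (k0 ^ 2)
  have hden : DifferentiableAt ℝ (fun z : R2 => 2 * k0 ^ 2 / (k0 ^ 2 + (z 0 ^ 2 + z 1 ^ 2))) y := by
    have h := (hsum.inv hdenne).const_mul (2 * k0 ^ 2)
    simpa [div_eq_mul_inv] using h
  rw [differentiableAt_piLp]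
  intro i
  fin_cases i
  · have he : (fun z : R2 => mmap k0 z 0)
        = fun z : R2 => 2 * k0 ^ 2 / (k0 ^ 2 + (z 0 ^ 2 + z 1 ^ 2)) * z 0 :=
      funext fun z => mmap_apply0 k0 z
    exact he ▸ (hden.mul h0)
  · have he : (fun z : R2 => mmap k0 z 1)
        = fun z : R2 => 2 * k0 ^ 2 / (k0 ^ 2 + (z 0 ^ 2 + z 1 ^ 2)) * z 1 :=
      funext fun z => mmap_apply1 k0 z
    exact he ▸ (hden.mul h1)
  · have he : (fun z : R2 => mmap k0 z 2)
        = fun z : R2 => Real.sqrt (k0 ^ 2 -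
            (2 * k0 ^ 2 / (k0 ^ 2 + (z 0 ^ 2 + z 1 ^ 2))) ^ 2 * (z 0 ^ 2 + z 1 ^ 2)) - k0 :=
      funext fun z => mmap_apply2 k0 z
    have hin : DifferentiableAt ℝ (fun z : R2 => k0 ^ 2 -
        (2 * k0 ^ 2 / (k0 ^ 2 + (z 0 ^ 2 + z 1 ^ 2))) ^ 2 * (z 0 ^ 2 + z 1 ^ 2)) y := by
      have h := ((hden.pow 2).mul hq).const_sub (k0 ^ 2)
      exact h
    have hne' : (fun z : R2 => k0 ^ 2 -
        (2 * k0 ^ 2 / (k0 ^ 2 + (z 0 ^ 2 + z 1 ^ 2))) ^ 2 * (z 0 ^ 2 + z 1 ^ 2)) y ≠ 0 :=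
      ne_of_gt (key_pos hk0 hn)
    exact he ▸ ((hin.sqrt hne').sub_const k0)

end ReconAux

namespace ReconAux

lemma curve_hasDerivAt {k0 : ℝ} (hk0 : 0 < k0) (φ : R2) (hφ1 : φ 0 ^ 2 + φ 1 ^ 2 = 1)
    {r : ℝ} (hr : k0 < |r|) :
    HasDerivAt (fun u : ℝ => mmap k0 (r • φ + u • rot90 φ))
      ((2 * k0 ^ 2 / (k0 ^ 2 + r ^ 2)) • (WithLp.toLp 2 (![-(φ 1), φ 0, 0] : Fin 3 → ℝ) : R3)) 0 := by
  have hr2 : k0 ^ 2 < r ^ 2 := by nlinarith [abs_nonneg r, sq_abs r]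
  -- coordinates of the moving point
  have hc0 : ∀ u : ℝ, (r • φ + u • rot90 φ : R2) 0 = r * φ 0 + u * (-(φ 1)) := by
    intro u; simp [rot90]
  have hc1 : ∀ u : ℝ, (r • φ + u • rot90 φ : R2) 1 = r * φ 1 + u * φ 0 := by
    intro u; simp [rot90]
  have hsum : ∀ u : ℝ,
      (r • φ + u • rot90 φ : R2) 0 ^ 2 + (r • φ + u • rot90 φ : R2) 1 ^ 2 = r ^ 2 + u ^ 2 := by
    intro u; rw [hc0, hc1]; linear_combination (r ^ 2 + u ^ 2) * hφ1
  -- scalar derivative facts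
  have hden : HasDerivAt (fun u : ℝ => k0 ^ 2 + (r ^ 2 + u ^ 2)) 0 0 := by
    have h2 : HasDerivAt (fun u : ℝ => u ^ 2) 0 0 := by simpa using hasDerivAt_pow 2 (0 : ℝ)
    simpa using (h2.const_add (r ^ 2)).const_add (k0 ^ 2)
  have hdennz : k0 ^ 2 + (r ^ 2 + (0:ℝ) ^ 2) ≠ 0 := by nlinarith
  have hcder : HasDerivAt (fun u : ℝ => 2 * k0 ^ 2 / (k0 ^ 2 + (r ^ 2 + u ^ 2))) 0 0 := by
    have h := (hden.inv hdennz).const_mul (2 * k0 ^ 2)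
    simp only [neg_zero, zero_div, mul_zero] at h
    have h2 : (fun u : ℝ => 2 * k0 ^ 2 * (k0 ^ 2 + (r ^ 2 + u ^ 2))⁻¹)
        = fun u : ℝ => 2 * k0 ^ 2 / (k0 ^ 2 + (r ^ 2 + u ^ 2)) := by
      funext u; rw [div_eq_mul_inv]
    rw [← h2]
    exact h
  have hlin0 : HasDerivAt (fun u : ℝ => r * φ 0 + u * (-(φ 1))) (-(φ 1)) 0 := by
    simpa using ((hasDerivAt_id (0:ℝ)).mul_const (-(φ 1))).const_add (r * φ 0)
  have hlin1 : HasDerivAt (fun u : ℝ => r * φ 1 + u * φ 0) (φ 0) 0 := by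
    simpa using ((hasDerivAt_id (0:ℝ)).mul_const (φ 0)).const_add (r * φ 1)
  have h0 : HasDerivAt (fun u : ℝ => 2 * k0 ^ 2 / (k0 ^ 2 + (r ^ 2 + u ^ 2)) * (r * φ 0 + u * (-(φ 1))))
      (2 * k0 ^ 2 / (k0 ^ 2 + r ^ 2) * (-(φ 1))) 0 := by
    have h := hcder.mul hlin0
    exact h.congr_deriv (by norm_num)
  have h1 : HasDerivAt (fun u : ℝ => 2 * k0 ^ 2 / (k0 ^ 2 + (r ^ 2 + u ^ 2)) * (r * φ 1 + u * φ 0))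
      (2 * k0 ^ 2 / (k0 ^ 2 + r ^ 2) * φ 0) 0 := by
    have h := hcder.mul hlin1
    exact h.congr_deriv (by norm_num)
  have hrad : HasDerivAt (fun u : ℝ => r ^ 2 + u ^ 2) 0 0 := by
    have h2 : HasDerivAt (fun u : ℝ => u ^ 2) 0 0 := by simpa using hasDerivAt_pow 2 (0 : ℝ)
    simpa using h2.const_add (r ^ 2)
  have hin : HasDerivAt (fun u : ℝ => k0 ^ 2 -
      (2 * k0 ^ 2 / (k0 ^ 2 + (r ^ 2 + u ^ 2))) ^ 2 * (r ^ 2 + u ^ 2)) 0 0 := by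
    have hsq : HasDerivAt (fun u : ℝ => (2 * k0 ^ 2 / (k0 ^ 2 + (r ^ 2 + u ^ 2))) ^ 2) 0 0 := by
      have h := hcder.pow 2
      exact h.congr_deriv (by simp)
    have hmul := hsq.mul hrad
    have h := hmul.const_sub (k0 ^ 2)
    exact h.congr_deriv (by simp)
  have hinval : k0 ^ 2 - (2 * k0 ^ 2 / (k0 ^ 2 + (r ^ 2 + (0:ℝ) ^ 2))) ^ 2 * (r ^ 2 + (0:ℝ) ^ 2) ≠ 0 := by
    have := key_pos hk0 (by nlinarith : k0 ^ 2 < r ^ 2 + (0:ℝ) ^ 2)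
    simpa using ne_of_gt this
  have h2 : HasDerivAt (fun u : ℝ => Real.sqrt (k0 ^ 2 -
      (2 * k0 ^ 2 / (k0 ^ 2 + (r ^ 2 + u ^ 2))) ^ 2 * (r ^ 2 + u ^ 2)) - k0) 0 0 := by
    have h := (hin.sqrt hinval).sub_const k0
    exact h.congr_deriv (by simp)
  -- assemble via the pi-structure
  have hpi : ∀ i : Fin 3, HasDerivAt (fun u : ℝ => mmap k0 (r • φ + u • rot90 φ) i)
      (((2 * k0 ^ 2 / (k0 ^ 2 + r ^ 2)) • (WithLp.toLp 2 (![-(φ 1), φ 0, 0] : Fin 3 → ℝ) : R3)) i) 0 := by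
    intro i
    fin_cases i
    · have he : (fun u : ℝ => mmap k0 (r • φ + u • rot90 φ) 0)
          = fun u : ℝ => 2 * k0 ^ 2 / (k0 ^ 2 + (r ^ 2 + u ^ 2)) * (r * φ 0 + u * (-(φ 1))) := by
        funext u; rw [mmap_apply0, hsum u, hc0 u]
      have hv : (((2 * k0 ^ 2 / (k0 ^ 2 + r ^ 2)) • (WithLp.toLp 2 (![-(φ 1), φ 0, 0] : Fin 3 → ℝ) : R3)) 0)
          = 2 * k0 ^ 2 / (k0 ^ 2 + r ^ 2) * (-(φ 1)) := by
        simp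
      exact hv ▸ he ▸ h0
    · have he : (fun u : ℝ => mmap k0 (r • φ + u • rot90 φ) 1)
          = fun u : ℝ => 2 * k0 ^ 2 / (k0 ^ 2 + (r ^ 2 + u ^ 2)) * (r * φ 1 + u * φ 0) := by
        funext u; rw [mmap_apply1, hsum u, hc1 u]
      have hv : (((2 * k0 ^ 2 / (k0 ^ 2 + r ^ 2)) • (WithLp.toLp 2 (![-(φ 1), φ 0, 0] : Fin 3 → ℝ) : R3)) 1)
          = 2 * k0 ^ 2 / (k0 ^ 2 + r ^ 2) * φ 0 := by
        simp
      exact hv ▸ he ▸ h1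
    · have he : (fun u : ℝ => mmap k0 (r • φ + u • rot90 φ) 2)
          = fun u : ℝ => Real.sqrt (k0 ^ 2 -
              (2 * k0 ^ 2 / (k0 ^ 2 + (r ^ 2 + u ^ 2))) ^ 2 * (r ^ 2 + u ^ 2)) - k0 := by
        funext u; rw [mmap_apply2, hsum u]
      show HasDerivAt (fun u : ℝ => mmap k0 (r • φ + u • rot90 φ) 2)
          ((((2 * k0 ^ 2 / (k0 ^ 2 + r ^ 2)) • (WithLp.toLp 2 (![-(φ 1), φ 0, 0] : Fin 3 → ℝ) : R3)) : Fin 3 → ℝ) 2) 0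
      rw [he]
      have hv : ((((2 * k0 ^ 2 / (k0 ^ 2 + r ^ 2)) • (WithLp.toLp 2 (![-(φ 1), φ 0, 0] : Fin 3 → ℝ) : R3)) : Fin 3 → ℝ) 2)
          = 0 := by simp
      rw [hv]
      exact h2
  rw [hasDerivAt_iff_hasFDerivAt, ← hasFDerivWithinAt_univ, hasFDerivWithinAt_piLp]
  intro i
  rw [hasFDerivWithinAt_univ]
  have hclm : (PiLp.proj 2 (fun _ : Fin 3 => ℝ) i ∘L
      ContinuousLinearMap.toSpanSingleton ℝ ((2 * k0 ^ 2 / (k0 ^ 2 + r ^ 2)) • (WithLp.toLp 2 (![-(φ 1), φ 0, 0] : Fin 3 → ℝ) : R3)))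
      = ContinuousLinearMap.toSpanSingleton ℝ
        ((((2 * k0 ^ 2 / (k0 ^ 2 + r ^ 2)) • (WithLp.toLp 2 (![-(φ 1), φ 0, 0] : Fin 3 → ℝ) : R3)) : Fin 3 → ℝ) i) := by
    ext u
    simp
  rw [hclm, ← hasDerivAt_iff_hasFDerivAt]
  exact hpi i

end ReconAux

namespace ReconAux

lemma act3_hasDerivAt (R R' : ℝ → Mat3)
    (hderiv : ∀ t i j, HasDerivAt (fun s => R s i j) (R' t i j) t) (t : ℝ) (p : R3) :
    HasDerivAt (fun s => act3 (R s) p) (act3 (R' t) p) t := by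
  have hpi : ∀ i : Fin 3, HasDerivAt (fun s => act3 (R s) p i) (act3 (R' t) p i) t := by
    intro i
    have he : ∀ Q : Mat3, act3 Q p i = ∑ j : Fin 3, Q i j * p j := by
      intro Q
      simp [act3, Matrix.mulVec, dotProduct]
    simp only [he]
    exact HasDerivAt.fun_sum fun j _ => (hderiv t i j).mul_const (p j)
  rw [hasDerivAt_iff_hasFDerivAt, ← hasFDerivWithinAt_univ, hasFDerivWithinAt_piLp]
  intro i
  rw [hasFDerivWithinAt_univ]
  have hclm : (PiLp.proj 2 (fun _ : Fin 3 => ℝ) i ∘L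
      ContinuousLinearMap.toSpanSingleton ℝ (act3 (R' t) p))
      = ContinuousLinearMap.toSpanSingleton ℝ ((act3 (R' t) p : Fin 3 → ℝ) i) := by
    ext
    simp
  rw [hclm, ← hasDerivAt_iff_hasFDerivAt]
  exact hpi i

/-- `act3 Q` as a continuous linear map. -/
def act3L (Q : Mat3) : R3 →L[ℝ] R3 :=
  LinearMap.toContinuousLinearMap
    { toFun := act3 Q
      map_add' := fun x y => by simp [act3, Matrix.mulVec_add]
      map_smul' := fun c x => by simp [act3, Matrix.mulVec_smul] }

@[simp] lemma act3L_apply (Q : Mat3) (x : R3) : act3L Q x = act3 Q x := rfl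

end ReconAux

namespace ReconAux

open FourierTransform in
lemma FT_eq (f : R3 → ℝ) (y : R3) :
    FT f y = ((2 * π : ℝ) ^ (-(3 : ℝ) / 2) : ℝ) •
      (𝓕 (fun x : R3 => (f x : ℂ)) ((2 * π)⁻¹ • y)) := by
  rw [Real.fourier_eq', FT, Complex.real_smul]
  congr 1
  apply MeasureTheory.integral_congr_ae
  filter_upwards with x
  rw [smul_eq_mul, mul_comm]
  congr 1
  rw [real_inner_smul_right]
  have h : -2 * π * ((2 * π)⁻¹ * ⟪x, y⟫) = -⟪x, y⟫ := by
    field_simp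
  rw [h]
  push_cast
  ring

lemma FT_differentiable {f : R3 → ℝ} (hf : MeasureTheory.Integrable f)
    (hsupp : HasCompactSupport f) : Differentiable ℝ (FT f) := by
  have hfc : MeasureTheory.Integrable (fun x : R3 => (f x : ℂ)) := hf.ofReal
  have hnorm : MeasureTheory.Integrable (fun x : R3 => ‖x‖ * ‖(f x : ℂ)‖) := by
    obtain ⟨C, hC⟩ := hsupp.isBounded.subset_closedBall (0 : R3)
    refine MeasureTheory.Integrable.mono' (hf.norm.const_mul (max C 0))
      (Continuous.aestronglyMeasurable (by continuity)
        |>.mul hfc.aestronglyMeasurable.norm) ?_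
    filter_upwards with x
    rw [Real.norm_eq_abs, abs_of_nonneg (by positivity)]
    by_cases hx : x ∈ tsupport f
    · have h1 : ‖x‖ ≤ max C 0 := by
        have := hC hx
        simp only [Metric.mem_closedBall, dist_zero_right] at this
        exact this.trans (le_max_left _ _)
      calc ‖x‖ * ‖(f x : ℂ)‖ ≤ max C 0 * ‖(f x : ℂ)‖ :=
            mul_le_mul_of_nonneg_right h1 (norm_nonneg _)
        _ = max C 0 * ‖f x‖ := by rw [Complex.norm_real]
    · have h0 : f x = 0 := image_eq_zero_of_notMem_tsupport hx
      simp [h0]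
  have h1 : Differentiable ℝ (FourierTransform.fourier (fun x : R3 => (f x : ℂ))) :=
    Real.differentiable_fourier hfc hnorm
  have he : FT f = fun y : R3 => ((2 * π : ℝ) ^ (-(3 : ℝ) / 2) : ℝ) •
      (FourierTransform.fourier (fun x : R3 => (f x : ℂ)) ((2 * π)⁻¹ • y)) :=
    funext fun y => FT_eq f y
  rw [he]
  exact ((h1.comp (differentiable_id.const_smul ((2 * π)⁻¹))).const_smul (((2 * π : ℝ) ^ (-(3 : ℝ) / 2) : ℝ)))

lemma g_differentiable {f : R3 → ℝ} (hf : MeasureTheory.Integrable f)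
    (hsupp : HasCompactSupport f) :
    Differentiable ℝ (fun x : R3 => ‖FT f x‖ ^ 2) := by
  have hFT := FT_differentiable hf hsupp
  have hre : Differentiable ℝ (fun x : R3 => (FT f x).re) :=
    Complex.reCLM.differentiable.comp hFT
  have him : Differentiable ℝ (fun x : R3 => (FT f x).im) :=
    Complex.imCLM.differentiable.comp hFT
  have he : (fun x : R3 => ‖FT f x‖ ^ 2)
      = fun x : R3 => (FT f x).re * (FT f x).re + (FT f x).im * (FT f x).im := by
    funext x
    rw [Complex.sq_norm, Complex.normSq_apply]
  rw [he]
  exact (hre.mul hre).add (him.mul him)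

end ReconAux

namespace ReconAux

lemma smul_coord (c : ℝ) (v : R2) (i : Fin 2) : (c • v : R2) i = c * v i := rfl

lemma cross_identity {k0 : ℝ} (hk0 : 0 < k0) (φ : R2) (hφ1 : φ 0 ^ 2 + φ 1 ^ 2 = 1)
    {r : ℝ} (hr : k0 < |r|) (ρ ζ : ℝ) :
    cross3 (WithLp.toLp 2 (![ρ * φ 0, ρ * φ 1, ζ] : Fin 3 → ℝ) : R3) (mmap k0 (r • φ))
      = (k0 * ρ + r * ζ) •
        ((2 * k0 ^ 2 / (k0 ^ 2 + r ^ 2)) • (WithLp.toLp 2 (![-(φ 1), φ 0, 0] : Fin 3 → ℝ) : R3)) := by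
  have hr2 : k0 ^ 2 < r ^ 2 := by nlinarith [abs_nonneg r, sq_abs r]
  have hdne : k0 ^ 2 + r ^ 2 ≠ 0 := by nlinarith
  have ha0 : (r • φ : R2) 0 = r * φ 0 := rfl
  have ha1 : (r • φ : R2) 1 = r * φ 1 := rfl
  have hs : (r • φ : R2) 0 ^ 2 + (r • φ : R2) 1 ^ 2 = r ^ 2 := by
    rw [ha0, ha1]; linear_combination r ^ 2 * hφ1
  have hp0 : mmap k0 (r • φ) 0 = 2 * k0 ^ 2 / (k0 ^ 2 + r ^ 2) * (r * φ 0) := by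
    rw [mmap_apply0, hs, ha0]
  have hp1 : mmap k0 (r • φ) 1 = 2 * k0 ^ 2 / (k0 ^ 2 + r ^ 2) * (r * φ 1) := by
    rw [mmap_apply1, hs, ha1]
  have hp2 : mmap k0 (r • φ) 2 = k0 * (r ^ 2 - k0 ^ 2) / (k0 ^ 2 + r ^ 2) - k0 := by
    rw [mmap_apply2, hs]
    congr 1
    have h1 : k0 ^ 2 - (2 * k0 ^ 2 / (k0 ^ 2 + r ^ 2)) ^ 2 * r ^ 2
        = (k0 * (r ^ 2 - k0 ^ 2) / (k0 ^ 2 + r ^ 2)) ^ 2 := by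
      field_simp
      ring
    rw [h1, Real.sqrt_sq]
    exact div_nonneg (mul_nonneg hk0.le (by linarith)) (by positivity)
  have hsimp : ∀ i : Fin 3,
      cross3 (WithLp.toLp 2 (![ρ * φ 0, ρ * φ 1, ζ] : Fin 3 → ℝ) : R3) (mmap k0 (r • φ)) i
        = ((k0 * ρ + r * ζ) •
          ((2 * k0 ^ 2 / (k0 ^ 2 + r ^ 2)) • (WithLp.toLp 2 (![-(φ 1), φ 0, 0] : Fin 3 → ℝ) : R3)) : R3) i := by
    intro i
    fin_cases i <;>
    · show cross3 (WithLp.toLp 2 (![ρ * φ 0, ρ * φ 1, ζ] : Fin 3 → ℝ) : R3) (mmap k0 (r • φ)) _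
          = (k0 * ρ + r * ζ) * ((2 * k0 ^ 2 / (k0 ^ 2 + r ^ 2)) * _)
      simp only [cross3, cross_apply, Matrix.cons_val_zero, Matrix.cons_val_one, Matrix.head_cons,
        Matrix.cons_val_two, Matrix.tail_cons, hp0, hp1, hp2, PiLp.smul_apply, Equiv.toFun_as_coe, WithLp.equiv_apply, WithLp.ofLp_toLp,
        smul_eq_mul, Fin.zero_eta, Fin.mk_one, Fin.reduceFinMk, Matrix.cons_val]
      field_simp
      ring
  ext i
  exact hsimp i

end ReconAux

namespace ReconAux

lemma key_relation (k0 : ℝ) (hk0 : 0 < k0) (f : R3 → ℝ)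
    (hf : MeasureTheory.Integrable f) (hsupp : HasCompactSupport f)
    (R R' : ℝ → Mat3) (hSO : ∀ t, SO3 (R t))
    (hderiv : ∀ t i j, HasDerivAt (fun s => R s i j) (R' t i j) t)
    (ω : ℝ → R3)
    (hω : ∀ t (y : R3), act3 ((R t).transpose * R' t) y = cross3 (ω t) y)
    (t : ℝ) (φ : R2) (hφ1 : φ 0 ^ 2 + φ 1 ^ 2 = 1) (ρ ζ : ℝ)
    (hωt : ω t = (WithLp.toLp 2 (![ρ * φ 0, ρ * φ 1, ζ] : Fin 3 → ℝ) : R3))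
    (r : ℝ) (hr : k0 < |r|) :
    deriv (fun s => nuT k0 f (R s) (r • φ)) t
      = (k0 * ρ + r * ζ) * ⟪gradient (nuT k0 f (R t)) (r • φ), rot90 φ⟫ := by
  have hφn : ‖φ‖ = 1 := by
    have h := normsq_R2 φ
    nlinarith [norm_nonneg φ]
  set y : R2 := r • φ with hy_def
  have hy : k0 < ‖y‖ := by
    rw [hy_def, norm_smul, hφn]
    simpa using hr
  set g : R3 → ℝ := fun x => ‖FT f x‖ ^ 2 with hg_def
  have hg : Differentiable ℝ g := g_differentiable hf hsupp
  set p : R3 := mmap k0 y with hp_def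
  set X : R3 := act3 (R t) p with hX_def
  have hm : DifferentiableAt ℝ (mmap k0) y := diff_mmap hk0 hy
  -- time derivative
  have hcurveT : HasDerivAt (fun s => act3 (R s) p) (act3 (R' t) p) t :=
    act3_hasDerivAt R R' hderiv t p
  have hL : deriv (fun s => nuT k0 f (R s) y) t = fderiv ℝ g X (act3 (R' t) p) := by
    have h := (hg X).hasFDerivAt.comp_hasDerivAt t hcurveT
    exact h.deriv
  -- spatial derivative
  have hcomp : HasFDerivAt (nuT k0 f (R t))
      ((fderiv ℝ g X).comp ((act3L (R t)).comp (fderiv ℝ (mmap k0) y))) y := by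
    have h1 := (act3L (R t)).hasFDerivAt.comp y hm.hasFDerivAt
    exact (hg X).hasFDerivAt.comp y h1
  have hgrad : ⟪gradient (nuT k0 f (R t)) y, rot90 φ⟫
      = fderiv ℝ g X (act3 (R t) (fderiv ℝ (mmap k0) y (rot90 φ))) := by
    rw [gradient, InnerProductSpace.toDual_symm_apply, hcomp.fderiv]
    rfl
  -- directional derivative of mmap
  have hline : HasDerivAt (fun u : ℝ => y + u • rot90 φ) (rot90 φ) 0 := by
    have h := ((hasDerivAt_id (0 : ℝ)).smul_const (rot90 φ)).const_add y
    simpa using h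
  have hdir : fderiv ℝ (mmap k0) y (rot90 φ)
      = (2 * k0 ^ 2 / (k0 ^ 2 + r ^ 2)) • (WithLp.toLp 2 (![-(φ 1), φ 0, 0] : Fin 3 → ℝ) : R3) := by
    have h1 : HasDerivAt (fun u : ℝ => mmap k0 (y + u • rot90 φ))
        (fderiv ℝ (mmap k0) y (rot90 φ)) 0 := by
      have hm' : HasFDerivAt (mmap k0) (fderiv ℝ (mmap k0) y) (y + (0:ℝ) • rot90 φ) := by
        simpa using hm.hasFDerivAt
      have h := hm'.comp_hasDerivAt 0 hline
      exact h
    exact h1.unique (curve_hasDerivAt hk0 φ hφ1 hr)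
  -- rotate the cross product
  have hRR : R t * (R t).transpose = 1 := mul_eq_one_comm.mp (hSO t).1
  have hRp : act3 (R' t) p = act3 (R t) (cross3 (ω t) p) := by
    rw [← hω t p]
    show WithLp.toLp 2 (Matrix.mulVec (R' t) p.ofLp) = WithLp.toLp 2 (Matrix.mulVec (R t) (Matrix.mulVec ((R t).transpose * R' t) p.ofLp))
    rw [Matrix.mulVec_mulVec, ← Matrix.mul_assoc, hRR, Matrix.one_mul]
  have hcross : cross3 (ω t) p
      = (k0 * ρ + r * ζ) •
        ((2 * k0 ^ 2 / (k0 ^ 2 + r ^ 2)) • (WithLp.toLp 2 (![-(φ 1), φ 0, 0] : Fin 3 → ℝ) : R3)) := by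
    rw [hωt, hp_def, hy_def]
    exact cross_identity hk0 φ hφ1 hr ρ ζ
  have hact_smul : act3 (R t) ((k0 * ρ + r * ζ) •
        ((2 * k0 ^ 2 / (k0 ^ 2 + r ^ 2)) • (WithLp.toLp 2 (![-(φ 1), φ 0, 0] : Fin 3 → ℝ) : R3)))
      = (k0 * ρ + r * ζ) • act3 (R t)
        ((2 * k0 ^ 2 / (k0 ^ 2 + r ^ 2)) • (WithLp.toLp 2 (![-(φ 1), φ 0, 0] : Fin 3 → ℝ) : R3)) :=
    (act3L (R t)).map_smul _ _
  rw [hL, hRp, hcross, hact_smul, (fderiv ℝ g X).map_smul, hgrad, hdir]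
  simp [smul_eq_mul]

end ReconAux

namespace ReconAux

lemma exists_rep (a b : ℝ) :
    ∃ α ρ' : ℝ, 0 ≤ α ∧ α < π ∧ a = ρ' * Real.cos α ∧ b = ρ' * Real.sin α := by
  rcases lt_trichotomy b 0 with hb | hb | hb
  · set s : ℝ := Real.sqrt (a ^ 2 + b ^ 2) with hs_def
    have hs2 : s ^ 2 = a ^ 2 + b ^ 2 := Real.sq_sqrt (by positivity)
    have hs : 0 < s := Real.sqrt_pos.mpr (by nlinarith)
    have hup : a / s ≤ 1 := by rw [div_le_one hs]; nlinarith [sq_nonneg (a - s)]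
    have hlt : a / s < 1 := by
      rw [div_lt_one hs]
      nlinarith [sq_nonneg (a - s), mul_pos (neg_pos.mpr hb) (neg_pos.mpr hb)]
    have hlo : -1 ≤ a / s := by rw [le_div_iff₀ hs]; nlinarith [sq_nonneg (a + s)]
    refine ⟨Real.arccos (-(a / s)), -s, Real.arccos_nonneg _, ?_, ?_, ?_⟩
    · refine lt_of_le_of_ne (Real.arccos_le_pi _) fun h => ?_
      have := Real.arccos_eq_pi.mp h
      have : 1 ≤ a / s := by linarith
      linarith
    · rw [Real.cos_arccos (by linarith) (by linarith)]
      field_simp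
    · rw [Real.sin_arccos]
      have h1 : 1 - (-(a / s)) ^ 2 = (-(b / s)) ^ 2 := by
        field_simp
        nlinarith [hs2]
      have hnn : (0:ℝ) ≤ -(b / s) := by
        rw [← neg_div]
        exact div_nonneg (by linarith) hs.le
      rw [h1, Real.sqrt_sq hnn]
      field_simp
  · exact ⟨0, a, le_refl 0, Real.pi_pos, by simp, by simp [hb]⟩
  · set s : ℝ := Real.sqrt (a ^ 2 + b ^ 2) with hs_def
    have hs2 : s ^ 2 = a ^ 2 + b ^ 2 := Real.sq_sqrt (by positivity)
    have hs : 0 < s := Real.sqrt_pos.mpr (by nlinarith)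
    have hup : a / s ≤ 1 := by rw [div_le_one hs]; nlinarith [sq_nonneg (a - s)]
    have hlt : -1 < a / s := by
      rw [lt_div_iff₀ hs]
      nlinarith [sq_nonneg (a + s), mul_pos hb hb]
    refine ⟨Real.arccos (a / s), s, Real.arccos_nonneg _, ?_, ?_, ?_⟩
    · refine lt_of_le_of_ne (Real.arccos_le_pi _) fun h => ?_
      have := Real.arccos_eq_pi.mp h
      linarith
    · rw [Real.cos_arccos (by linarith) hup]
      field_simp
    · rw [Real.sin_arccos]
      have h1 : 1 - (a / s) ^ 2 = (b / s) ^ 2 := by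
        field_simp
        nlinarith [hs2]
      rw [h1, Real.sqrt_sq (div_nonneg hb.le hs.le)]
      field_simp

end ReconAux

/-- Theorem: reconstruction of the angular velocity via the stereographic
version of the infinitesimal common circle method.  If `φ ∈ S¹₊` is the unique direction
for which parameters `ρ, ζ` with the transformed infinitesimal relation exist, and the set
`{ r : |r| > k0, ⟨∇ν̃_t(r φ), (−φ₂, φ₁)⟩ ≠ 0 }` has at least two elements, then
`ω_t = (ρ φ₁, ρ φ₂, ζ)`. -/
theorem reconstruction_angular_velocity_stereo (k0 : ℝ) (hk0 : 0 < k0) (f : R3 → ℝ)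
    (hf : MeasureTheory.Integrable f) (hsupp : HasCompactSupport f)
    (R R' : ℝ → Mat3) (hSO : ∀ t, SO3 (R t))
    (hderiv : ∀ t i j, HasDerivAt (fun s => R s i j) (R' t i j) t)
    (hcont : ∀ i j, Continuous fun t => R' t i j)
    (ω : ℝ → R3)
    (hω : ∀ t (y : R3), act3 ((R t).transpose * R' t) y = cross3 (ω t) y)
    (t : ℝ) (φ : R2) (hφ : φ ∈ S1plus) (ρ ζ : ℝ)
    (heq : ∀ r : ℝ, k0 < |r| →
      deriv (fun s => nuT k0 f (R s) (r • φ)) t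
        = (k0 * ρ + r * ζ) * ⟪gradient (nuT k0 f (R t)) (r • φ), rot90 φ⟫)
    (huniq : ∀ φ' ∈ S1plus,
      (∃ ρ' ζ' : ℝ, ∀ r : ℝ, k0 < |r| →
        deriv (fun s => nuT k0 f (R s) (r • φ')) t
          = (k0 * ρ' + r * ζ') * ⟪gradient (nuT k0 f (R t)) (r • φ'), rot90 φ'⟫) → φ' = φ)
    (hset : Set.Nontrivial
      {r : ℝ | k0 < |r| ∧ ⟪gradient (nuT k0 f (R t)) (r • φ), rot90 φ⟫ ≠ 0}) :
    ω t = (![ρ * φ 0, ρ * φ 1, ζ] : Fin 3 → ℝ) := by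
  obtain ⟨α, ρ', hα0, hαπ, ha, hb⟩ := ReconAux.exists_rep ((ω t) 0) ((ω t) 1)
  set φ' : R2 := (WithLp.toLp 2 (![Real.cos α, Real.sin α] : Fin 2 → ℝ) : R2) with hφ'_def
  have hφ'S : φ' ∈ S1plus := ⟨α, hα0, hαπ, rfl⟩
  have hφ'0 : φ' 0 = Real.cos α := rfl
  have hφ'1 : φ' 1 = Real.sin α := rfl
  have hunit : φ' 0 ^ 2 + φ' 1 ^ 2 = 1 := by
    rw [hφ'0, hφ'1]
    exact Real.cos_sq_add_sin_sq α
  have hωt : ω t = (WithLp.toLp 2 (![ρ' * φ' 0, ρ' * φ' 1, (ω t) 2] : Fin 3 → ℝ) : R3) := by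
    ext i
    fin_cases i
    · show (ω t) 0 = ρ' * φ' 0
      rw [hφ'0]; exact ha
    · show (ω t) 1 = ρ' * φ' 1
      rw [hφ'1]; exact hb
    · rfl
  have hrel : ∀ r : ℝ, k0 < |r| →
      deriv (fun s => nuT k0 f (R s) (r • φ')) t
        = (k0 * ρ' + r * ((ω t) 2)) * ⟪gradient (nuT k0 f (R t)) (r • φ'), rot90 φ'⟫ :=
    fun r hr => ReconAux.key_relation k0 hk0 f hf hsupp R R' hSO hderiv ω hω t φ' hunit
      ρ' ((ω t) 2) hωt r hr
  have hφeq : φ' = φ := huniq φ' hφ'S ⟨ρ', (ω t) 2, hrel⟩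
  rw [hφeq] at hrel hωt
  obtain ⟨r1, h1, r2, h2, hne⟩ := hset
  simp only [Set.mem_setOf_eq] at h1 h2
  have e1 : k0 * ρ + r1 * ζ = k0 * ρ' + r1 * ((ω t) 2) :=
    mul_right_cancel₀ h1.2 ((heq r1 h1.1).symm.trans (hrel r1 h1.1))
  have e2 : k0 * ρ + r2 * ζ = k0 * ρ' + r2 * ((ω t) 2) :=
    mul_right_cancel₀ h2.2 ((heq r2 h2.1).symm.trans (hrel r2 h2.1))
  have hζ : ζ = (ω t) 2 := by
    have h4 : (r1 - r2) * (ζ - (ω t) 2) = 0 := by linear_combination e1 - e2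
    rcases mul_eq_zero.mp h4 with h | h
    · exact absurd (by linarith : r1 = r2) hne
    · linarith
  have hρ : ρ = ρ' := by
    rw [hζ] at e1
    have h5 : k0 * ρ = k0 * ρ' := by linarith
    exact mul_left_cancel₀ (ne_of_gt hk0) h5
  rw [hρ, hζ]
  exact congrArg WithLp.ofLp hωt
end
end
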